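/- arXiv:1401.4425 — 5 statements merged into one kernel-verified Lean document; each statement's English description precedes it below -/
import Mathlib

section
/- Fix y ∈ R^n, an n×p real matrix X, positive weights w_1,…,w_p with W = diag(w_1,…,w_p), and λ > 0. If b¹ and b² are both minimizers over b ∈ R^p of the weighted Lasso loss ℓ(b) = (1/2)‖y − Xb‖₂² + nλ Σ_{j=1}^p w_j|b_j|, then Xb¹ = Xb², and consequently the subgradient vectors S^i = (nλ)^{-1} W^{-1} Xᵀ(y − Xb^i) (i = 1,2) determined by the KKT condition coincide: S¹ = S². -/
open Matrix

/-- The weighted Lasso loss `ℓ(b) = (1/2)‖y − Xb‖₂² + nλ Σ_j w_j |b_j|`. -/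
noncomputable def lassoLoss {n p : ℕ} (X : Matrix (Fin n) (Fin p) ℝ) (y : Fin n → ℝ)
    (w : Fin p → ℝ) (lam : ℝ) (b : Fin p → ℝ) : ℝ :=
  (1 / 2) * ∑ i, (y i - X.mulVec b i) ^ 2 + n * lam * ∑ j, w j * |b j|

/-- Any two minimizers of the weighted Lasso loss have the same fitted values `Xb`, and
consequently the same KKT subgradient `S = (nλ)⁻¹ W⁻¹ Xᵀ (y − Xb)`. -/
theorem lasso_fitted_and_subgradient_unique {n p : ℕ}
    (X : Matrix (Fin n) (Fin p) ℝ) (y : Fin n → ℝ)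
    (w : Fin p → ℝ) (hw : ∀ j, 0 < w j) (lam : ℝ) (hlam : 0 < lam)
    (b₁ b₂ : Fin p → ℝ)
    (h₁ : ∀ b, lassoLoss X y w lam b₁ ≤ lassoLoss X y w lam b)
    (h₂ : ∀ b, lassoLoss X y w lam b₂ ≤ lassoLoss X y w lam b) :
    X.mulVec b₁ = X.mulVec b₂ ∧
      (fun j => ((n : ℝ) * lam)⁻¹ * (w j)⁻¹ * Xᵀ.mulVec (y - X.mulVec b₁) j) =
      (fun j => ((n : ℝ) * lam)⁻¹ * (w j)⁻¹ * Xᵀ.mulVec (y - X.mulVec b₂) j) := by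
  have hE : lassoLoss X y w lam b₁ = lassoLoss X y w lam b₂ :=
    le_antisymm (h₁ b₂) (h₂ b₁)
  set b : Fin p → ℝ := fun j => (b₁ j + b₂ j) / 2 with hb
  have hXb : ∀ i, X.mulVec b i = (X.mulVec b₁ i + X.mulVec b₂ i) / 2 := by
    intro i
    simp only [Matrix.mulVec, dotProduct, hb]
    rw [← Finset.sum_add_distrib, Finset.sum_div]
    exact Finset.sum_congr rfl fun j _ => by ring
  have hquad : ∑ i, (y i - X.mulVec b i) ^ 2 =
      ∑ i, (((y i - X.mulVec b₁ i) ^ 2 + (y i - X.mulVec b₂ i) ^ 2) / 2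
        - (X.mulVec b₁ i - X.mulVec b₂ i) ^ 2 / 4) := by
    apply Finset.sum_congr rfl
    intro i _
    rw [hXb i]; ring
  have hpen : ∑ j, w j * |b j| ≤ (∑ j, w j * |b₁ j| + ∑ j, w j * |b₂ j|) / 2 := by
    rw [← Finset.sum_add_distrib, Finset.sum_div]
    apply Finset.sum_le_sum
    intro j _
    have : |b j| ≤ (|b₁ j| + |b₂ j|) / 2 := by
      simp only [hb]
      rw [abs_div]
      have := abs_add_le (b₁ j) (b₂ j)
      have h2 : |(2 : ℝ)| = 2 := by norm_num
      rw [h2]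
      linarith
    have hwj := (hw j).le
    nlinarith [this, hwj, abs_nonneg (b j)]
  have hkey : lassoLoss X y w lam b ≤
      (lassoLoss X y w lam b₁ + lassoLoss X y w lam b₂) / 2
        - (1 / 8) * ∑ i, (X.mulVec b₁ i - X.mulVec b₂ i) ^ 2 := by
    unfold lassoLoss
    rw [hquad]
    rw [Finset.sum_sub_distrib]
    have hnl : (0 : ℝ) ≤ (n : ℝ) * lam := by positivity
    have hm := mul_le_mul_of_nonneg_left hpen hnl
    rw [← Finset.sum_div, ← Finset.sum_div, Finset.sum_add_distrib]
    linarith [hm]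
  have hsum0 : ∑ i, (X.mulVec b₁ i - X.mulVec b₂ i) ^ 2 ≤ 0 := by
    have hb1 := h₁ b
    rw [← hE] at hkey
    have : lassoLoss X y w lam b₁ ≤ lassoLoss X y w lam b₁
        - (1 / 8) * ∑ i, (X.mulVec b₁ i - X.mulVec b₂ i) ^ 2 := by
      calc lassoLoss X y w lam b₁ ≤ lassoLoss X y w lam b := hb1
        _ ≤ _ := by linarith [hkey]
    linarith
  have hXeq : X.mulVec b₁ = X.mulVec b₂ := by
    funext i
    have hall : ∀ i ∈ Finset.univ, (0:ℝ) ≤ (X.mulVec b₁ i - X.mulVec b₂ i) ^ 2 :=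
      fun i _ => sq_nonneg _
    have := (Finset.sum_eq_zero_iff_of_nonneg hall).mp
      (le_antisymm hsum0 (Finset.sum_nonneg hall))
    have hi := this i (Finset.mem_univ i)
    have := pow_eq_zero_iff (n := 2) (by norm_num) |>.mp hi
    linarith
  exact ⟨hXeq, by rw [hXeq]⟩
end

section
/- Let X be an n×p real matrix with rank(X) = p ≤ n, C = XᵀX/n, W = diag(w_1,…,w_p) with all w_j > 0, λ > 0, and β ∈ R^p. Then the map H(b, s) = Cb + λWs − Cβ is a bijection from the set {(b, s) ∈ R^p × R^p : s is a subgradient of the ℓ₁ norm at b} onto R^p; that is, for every u ∈ R^p there exists a unique pair (b, s) with s a subgradient of the ℓ₁ norm at b such that Cb + λWs − Cβ = u. -/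
open Matrix

/-- `s` is a subgradient of the ℓ₁ norm at `b`. -/
def IsL1Subgradient {p : ℕ} (s b : Fin p → ℝ) : Prop :=
  ∀ j, (b j ≠ 0 → s j = Real.sign (b j)) ∧ (b j = 0 → |s j| ≤ 1)

open Matrix

/-- From a one-sided quadratic lower bound for small positive t, conclude 0 ≤ E. -/
lemma aux_nonneg_of_small {E q δ : ℝ} (hq : 0 ≤ q) (hδ : 0 < δ)
    (h : ∀ t : ℝ, 0 < t → t < δ → 0 ≤ t * E + t ^ 2 / 2 * q) : 0 ≤ E := by
  by_contra hE
  push_neg at hE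
  set t := min (δ / 2) (-E / (q + 1)) with ht
  have ht0 : 0 < t := lt_min (by linarith) (div_pos (by linarith) (by linarith))
  have htδ : t < δ := lt_of_le_of_lt (min_le_left _ _) (by linarith)
  have h2 : t ≤ -E / (q + 1) := min_le_right _ _
  have h3 := h t ht0 htδ
  have h2' : t * (q + 1) ≤ -E := by
    rw [le_div_iff₀ (by linarith : (0:ℝ) < q + 1)] at h2
    linarith
  nlinarith

/-- Monotonicity of the scalar subgradient of `|·|`. -/
lemma aux_mono {x x' s s' : ℝ}
    (h : (x ≠ 0 → s = Real.sign x) ∧ (x = 0 → |s| ≤ 1))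
    (h' : (x' ≠ 0 → s' = Real.sign x') ∧ (x' = 0 → |s'| ≤ 1)) :
    0 ≤ (s - s') * (x - x') := by
  have key : ∀ y t : ℝ, ((y ≠ 0 → t = Real.sign y) ∧ (y = 0 → |t| ≤ 1)) →
      t * y = |y| ∧ |t| ≤ 1 := by
    rintro y t ⟨h1, h2⟩
    rcases lt_trichotomy y 0 with hy | hy | hy
    · rw [h1 hy.ne, Real.sign_of_neg hy, abs_of_neg hy]
      constructor
      · ring
      · rw [abs_neg, abs_one]
        
    · subst hy; simpa using h2 rfl
    · rw [h1 hy.ne', Real.sign_of_pos hy, abs_of_pos hy]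
      constructor
      · ring
      · rw [abs_one]
  obtain ⟨e1, e2⟩ := key x s h
  obtain ⟨f1, f2⟩ := key x' s' h'
  have g1 : s * x' ≤ |x'| := by
    calc s * x' ≤ |s * x'| := le_abs_self _
    _ = |s| * |x'| := abs_mul _ _
    _ ≤ 1 * |x'| := by gcongr
    _ = |x'| := one_mul _
  have g2 : s' * x ≤ |x| := by
    calc s' * x ≤ |s' * x| := le_abs_self _
    _ = |s'| * |x| := abs_mul _ _
    _ ≤ 1 * |x| := by gcongr
    _ = |x| := one_mul _
  nlinarith

lemma aux_inj {n p : ℕ} (X : Matrix (Fin n) (Fin p) ℝ) (hrank : X.rank = p) :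
    ∀ d : Fin p → ℝ, X.mulVec d = 0 → d = 0 := by
  intro d hd
  have h := LinearMap.finrank_range_add_finrank_ker X.mulVecLin
  rw [Module.finrank_pi] at h
  have hr : Module.finrank ℝ (LinearMap.range X.mulVecLin) = p := by
    simpa [Matrix.rank, Fintype.card_fin] using hrank
  have hk : Module.finrank ℝ (LinearMap.ker X.mulVecLin) = 0 := by
    rw [hr] at h; simpa [Fintype.card_fin] using h
  have : LinearMap.ker X.mulVecLin = ⊥ := Submodule.finrank_eq_zero.mp hk
  have hmem : d ∈ LinearMap.ker X.mulVecLin := by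
    simp [LinearMap.mem_ker, Matrix.mulVecLin_apply, hd]
  rw [this] at hmem
  simpa using hmem

lemma aux_symm {n p : ℕ} (X : Matrix (Fin n) (Fin p) ℝ) :
    ∀ a c : Fin p → ℝ, a ⬝ᵥ ((n : ℝ)⁻¹ • (Xᵀ * X)).mulVec c
      = c ⬝ᵥ ((n : ℝ)⁻¹ • (Xᵀ * X)).mulVec a := by
  intro a c
  set C : Matrix (Fin p) (Fin p) ℝ := (n : ℝ)⁻¹ • (Xᵀ * X) with hC
  have hsymm : Cᵀ = C := by
    rw [hC, Matrix.transpose_smul, Matrix.transpose_mul, Matrix.transpose_transpose]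
  rw [Matrix.dotProduct_mulVec, dotProduct_comm]
  congr 1
  nth_rewrite 1 [← hsymm]
  rw [Matrix.vecMul_transpose]

lemma aux_Cpos {n p : ℕ} (X : Matrix (Fin n) (Fin p) ℝ) (d : Fin p → ℝ) :
    d ⬝ᵥ ((n : ℝ)⁻¹ • (Xᵀ * X)).mulVec d = (n : ℝ)⁻¹ * (X.mulVec d ⬝ᵥ X.mulVec d) := by
  rw [Matrix.smul_mulVec, dotProduct_smul, smul_eq_mul,
    ← Matrix.mulVec_mulVec, Matrix.dotProduct_mulVec, Matrix.vecMul_transpose]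

lemma aux_dot_self_nonneg {m : ℕ} (v : Fin m → ℝ) : 0 ≤ v ⬝ᵥ v := by
  exact Finset.sum_nonneg fun i _ => mul_self_nonneg _

lemma aux_expand {n p : ℕ} (X : Matrix (Fin n) (Fin p) ℝ) (b : Fin p → ℝ) (t : ℝ) (j : Fin p) :
    (b + t • (Pi.single j (1:ℝ) : Fin p → ℝ)) ⬝ᵥ
        ((n : ℝ)⁻¹ • (Xᵀ * X)).mulVec (b + t • (Pi.single j (1:ℝ) : Fin p → ℝ))
      = b ⬝ᵥ ((n : ℝ)⁻¹ • (Xᵀ * X)).mulVec b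
        + 2 * t * (((n : ℝ)⁻¹ • (Xᵀ * X)).mulVec b j)
        + t ^ 2 * ((Pi.single j (1:ℝ) : Fin p → ℝ) ⬝ᵥ
            ((n : ℝ)⁻¹ • (Xᵀ * X)).mulVec (Pi.single j (1:ℝ) : Fin p → ℝ)) := by
  set C : Matrix (Fin p) (Fin p) ℝ := (n : ℝ)⁻¹ • (Xᵀ * X) with hC
  set e : Fin p → ℝ := (Pi.single j (1:ℝ) : Fin p → ℝ) with he
  have h1 : e ⬝ᵥ C.mulVec b = C.mulVec b j := by
    rw [he, single_dotProduct, one_mul]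
  have h2 : b ⬝ᵥ C.mulVec e = C.mulVec b j := by
    rw [aux_symm, h1]
  rw [Matrix.mulVec_add, Matrix.mulVec_smul, dotProduct_add, add_dotProduct,
    add_dotProduct, dotProduct_smul, smul_dotProduct,
    smul_dotProduct, dotProduct_smul, h1, h2, smul_eq_mul, smul_eq_mul,
    smul_eq_mul]
  ring

lemma aux_update {p : ℕ} (b : Fin p → ℝ) (t : ℝ) (j : Fin p) :
    b + t • (Pi.single j (1:ℝ) : Fin p → ℝ) = Function.update b j (b j + t) := by
  funext k
  by_cases h : k = j
  · subst h; simp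
  · simp [Function.update, h, Pi.single_eq_of_ne h]

lemma aux_sum_update {p : ℕ} (w b : Fin p → ℝ) (y : ℝ) (j : Fin p) :
    ∑ k, w k * |Function.update b j y k|
      = (∑ k, w k * |b k|) + w j * (|y| - |b j|) := by
  have h : (fun k => w k * |Function.update b j y k|)
      = Function.update (fun k => w k * |b k|) j (w j * |y|) := by
    funext k
    by_cases h : k = j
    · subst h; simp
    · simp [Function.update, h]
  rw [h, Finset.sum_update_of_mem (Finset.mem_univ j)]
  rw [Finset.sum_eq_sum_sdiff_singleton_add (Finset.mem_univ j) (fun k => w k * |b k|)]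
  ring

lemma aux_abs {x t : ℝ} (hx : x ≠ 0) (ht : |t| < |x|) :
    |x + t| = |x| + Real.sign x * t := by
  rcases lt_trichotomy x 0 with h | h | h
  · rw [Real.sign_of_neg h, abs_of_neg h]
    rw [abs_of_neg h] at ht
    rw [abs_of_neg (by cases abs_lt.mp ht; linarith)]
    ring
  · exact absurd h hx
  · rw [Real.sign_of_pos h, abs_of_pos h]
    rw [abs_of_pos h] at ht
    rw [abs_of_pos (by cases abs_lt.mp ht; linarith)]
    ring

/-- In the low-dimensional setting (`rank X = p ≤ n`), the map
`H(b, s) = Cb + λWs − Cβ` is a bijection from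
`{(b, s) : s is an ℓ₁ subgradient at b}` onto `ℝ^p`. -/
theorem lasso_KKT_bijection_low_dim {n p : ℕ} (hpn : p ≤ n)
    (X : Matrix (Fin n) (Fin p) ℝ) (hrank : X.rank = p)
    (w : Fin p → ℝ) (hw : ∀ j, 0 < w j) (lam : ℝ) (hlam : 0 < lam)
    (β : Fin p → ℝ) :
    ∀ u : Fin p → ℝ, ∃! bs : (Fin p → ℝ) × (Fin p → ℝ),
      IsL1Subgradient bs.2 bs.1 ∧
      (((n : ℝ)⁻¹ • (Xᵀ * X)).mulVec bs.1 + (fun j => lam * w j * bs.2 j)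
        - ((n : ℝ)⁻¹ • (Xᵀ * X)).mulVec β) = u := by
  intro u
  rcases Nat.eq_zero_or_pos p with hp | hp
  · subst hp
    refine ⟨⟨0, 0⟩, ⟨fun j => j.elim0, funext fun j => j.elim0⟩, ?_⟩
    rintro ⟨b, s⟩ _
    have hb : b = 0 := funext fun j => j.elim0
    have hs : s = 0 := funext fun j => j.elim0
    rw [hb, hs]
  have hn : 0 < n := lt_of_lt_of_le hp hpn
  have hn' : (0:ℝ) < (n:ℝ)⁻¹ := by positivity
  set C : Matrix (Fin p) (Fin p) ℝ := (n : ℝ)⁻¹ • (Xᵀ * X) with hCdef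
  set v : Fin p → ℝ := u + C.mulVec β with hvdef
  have hXinj := aux_inj X hrank
  -- reformulate the defining equation
  have hiff : ∀ b s : Fin p → ℝ,
      (C.mulVec b + (fun j => lam * w j * s j) - C.mulVec β = u)
        ↔ (∀ j, C.mulVec b j + lam * w j * s j = v j) := by
    intro b s
    constructor
    · intro h j
      have := congrFun h j
      simp only [Pi.sub_apply, Pi.add_apply, hvdef] at this ⊢
      linarith
    · intro h
      funext j
      have := h j
      simp only [Pi.sub_apply, Pi.add_apply, hvdef] at this ⊢
      linarith
  -- positivity of the quadratic form
  have hQpos : ∀ d : Fin p → ℝ, d ≠ 0 → 0 < d ⬝ᵥ C.mulVec d := by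
    intro d hd
    rw [hCdef, aux_Cpos]
    refine mul_pos hn' ?_
    rcases lt_or_eq_of_le (aux_dot_self_nonneg (X.mulVec d)) with h | h
    · exact h
    · exact absurd (hXinj d (dotProduct_self_eq_zero.mp h.symm)) hd
  have hQnonneg : ∀ d : Fin p → ℝ, 0 ≤ d ⬝ᵥ C.mulVec d := by
    intro d
    by_cases hd : d = 0
    · subst hd; simp
    · exact (hQpos d hd).le
  -- uniqueness of solution pairs
  have huniq : ∀ b s b' s' : Fin p → ℝ,
      IsL1Subgradient s b → IsL1Subgradient s' b' →
      (∀ j, C.mulVec b j + lam * w j * s j = v j) →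
      (∀ j, C.mulVec b' j + lam * w j * s' j = v j) →
      b = b' ∧ s = s' := by
    intro b s b' s' hsg hsg' he he'
    set d : Fin p → ℝ := b - b' with hd
    have hCd : ∀ j, C.mulVec d j = lam * w j * (s' j - s j) := by
      intro j
      have := he j
      have := he' j
      rw [hd, Matrix.mulVec_sub]
      simp only [Pi.sub_apply]
      linarith
    have hterm : ∀ j, d j * C.mulVec d j ≤ 0 := by
      intro j
      rw [hCd j]
      have hm := aux_mono (hsg j) (hsg' j)
      have : d j * (lam * w j * (s' j - s j))
          = -(lam * w j * ((s j - s' j) * (b j - b' j))) := by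
        rw [hd]; simp only [Pi.sub_apply]; ring
      rw [this]
      have := mul_nonneg (mul_nonneg hlam.le (hw j).le) hm
      linarith
    have hQle : d ⬝ᵥ C.mulVec d ≤ 0 :=
      Finset.sum_nonpos fun j _ => hterm j
    have hdz : d = 0 := by
      by_contra hdz
      exact absurd hQle (not_le.mpr (hQpos d hdz))
    have hbb : b = b' := sub_eq_zero.mp hdz
    refine ⟨hbb, funext fun j => ?_⟩
    have h1 := he j
    have h2 := he' j
    rw [hbb] at h1
    have : lam * w j * s j = lam * w j * s' j := by linarith
    exact mul_left_cancel₀ (mul_pos hlam (hw j)).ne' this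
  -- existence: minimize the penalized objective
  set Q : (Fin p → ℝ) → ℝ := fun d => d ⬝ᵥ C.mulVec d with hQdef
  set f : (Fin p → ℝ) → ℝ :=
    fun b => 1 / 2 * Q b - v ⬝ᵥ b + lam * ∑ k, w k * |b k| with hfdef
  have hQcont : Continuous Q := by
    have : Q = fun d => ∑ i, d i * ∑ j, C i j * d j := rfl
    rw [this]
    refine continuous_finset_sum _ fun i _ => (continuous_apply i).mul ?_
    exact continuous_finset_sum _ fun j _ => continuous_const.mul (continuous_apply j)
  have hfcont : Continuous f := by
    refine ((continuous_const.mul hQcont).sub ?_).add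
      (continuous_const.mul (continuous_finset_sum _ fun k _ =>
        continuous_const.mul (continuous_abs.comp (continuous_apply k))))
    exact continuous_finset_sum _ fun i _ => continuous_const.mul (continuous_apply i)
  -- coercivity constant
  have hne : Nonempty (Fin p) := ⟨⟨0, hp⟩⟩
  obtain ⟨b₀, hb₀S, hb₀min⟩ :=
    (isCompact_sphere (0 : Fin p → ℝ) 1).exists_isMinOn
      ⟨(fun _ => (1:ℝ)), by rw [mem_sphere_zero_iff_norm, pi_norm_const]; norm_num⟩
      hQcont.continuousOn
  set μ := Q b₀ with hμdef
  have hb₀norm : ‖b₀‖ = 1 := mem_sphere_zero_iff_norm.mp hb₀S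
  have hμpos : 0 < μ := hQpos b₀ (by intro h; rw [h] at hb₀norm; simp at hb₀norm)
  have hμ : ∀ d : Fin p → ℝ, μ * ‖d‖ ^ 2 ≤ Q d := by
    intro d
    by_cases hd : d = 0
    · subst hd; simp [hQdef]
    · have hc : 0 < ‖d‖ := norm_pos_iff.mpr hd
      set x : Fin p → ℝ := ‖d‖⁻¹ • d with hx
      have hxS : x ∈ Metric.sphere (0 : Fin p → ℝ) 1 := by
        rw [mem_sphere_zero_iff_norm, hx, norm_smul, norm_inv, norm_norm,
          inv_mul_cancel₀ hc.ne']
      have hQx : μ ≤ Q x := hb₀min hxS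
      have hQd : Q x = ‖d‖⁻¹ ^ 2 * Q d := by
        simp only [hQdef, hx, Matrix.mulVec_smul, dotProduct_smul,
          smul_dotProduct, smul_eq_mul]
        ring
      rw [hQd] at hQx
      have h2 : μ * ‖d‖ ^ 2 ≤ ‖d‖⁻¹ ^ 2 * Q d * ‖d‖ ^ 2 := by nlinarith
      calc μ * ‖d‖ ^ 2 ≤ ‖d‖⁻¹ ^ 2 * Q d * ‖d‖ ^ 2 := h2
        _ = Q d * (‖d‖⁻¹ * ‖d‖) ^ 2 := by ring
        _ = Q d := by rw [inv_mul_cancel₀ hc.ne']; ring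
  -- the minimizer exists
  set V := ∑ i, |v i| with hVdef
  have hdotle : ∀ b : Fin p → ℝ, v ⬝ᵥ b ≤ V * ‖b‖ := by
    intro b
    calc v ⬝ᵥ b = ∑ i, v i * b i := rfl
      _ ≤ ∑ i, |v i| * ‖b‖ := by
          refine Finset.sum_le_sum fun i _ => ?_
          calc v i * b i ≤ |v i * b i| := le_abs_self _
            _ = |v i| * |b i| := abs_mul _ _
            _ ≤ |v i| * ‖b‖ := by
                have h := norm_le_pi_norm b i
                rw [Real.norm_eq_abs] at h
                exact mul_le_mul_of_nonneg_left h (abs_nonneg _)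
      _ = V * ‖b‖ := by rw [← Finset.sum_mul]
  have hf0 : f 0 = 0 := by simp [hfdef, hQdef]
  have hev : ∀ᶠ b in Filter.cocompact (Fin p → ℝ), f 0 ≤ f b := by
    have h1 : ∀ᶠ b : Fin p → ℝ in Filter.cocompact _, 2 * V / μ ≤ ‖b‖ :=
      tendsto_norm_cocompact_atTop.eventually (Filter.eventually_ge_atTop _)
    refine h1.mono fun b hb => ?_
    rw [hf0]
    have h2 := hμ b
    have h3 := hdotle b
    have h4 : 0 ≤ lam * ∑ k, w k * |b k| :=
      mul_nonneg hlam.le (Finset.sum_nonneg fun k _ => mul_nonneg (hw k).le (abs_nonneg _))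
    have h5 : 0 ≤ ‖b‖ := norm_nonneg b
    have hb' : 2 * V ≤ ‖b‖ * μ := (div_le_iff₀ hμpos).mp hb
    simp only [hfdef]
    nlinarith [mul_le_mul_of_nonneg_left hb' h5]
  obtain ⟨m, hm⟩ := hfcont.exists_forall_le' 0 hev
  -- coordinatewise optimality
  set a : Fin p → ℝ := fun j => C.mulVec m j - v j with ha
  have key : ∀ (j : Fin p) (t : ℝ),
      0 ≤ t * a j + t ^ 2 / 2 * Q (Pi.single j (1:ℝ)) +
        lam * w j * (|m j + t| - |m j|) := by
    intro j t
    have h1 := hm (m + t • (Pi.single j (1:ℝ) : Fin p → ℝ))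
    have hQe := aux_expand X m t j
    rw [← hCdef] at hQe
    have hsum : ∑ k, w k * |(m + t • (Pi.single j (1:ℝ) : Fin p → ℝ)) k|
        = (∑ k, w k * |m k|) + w j * (|m j + t| - |m j|) := by
      rw [aux_update m t j, aux_sum_update]
    have hdot : v ⬝ᵥ (m + t • (Pi.single j (1:ℝ) : Fin p → ℝ))
        = v ⬝ᵥ m + t * v j := by
      rw [dotProduct_add, dotProduct_smul, dotProduct_single,
        smul_eq_mul, mul_one]
    simp only [hfdef, hQdef] at h1
    rw [hQe, hsum, hdot] at h1
    simp only [ha]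
    linarith
  have hq0 : ∀ j : Fin p, 0 ≤ Q (Pi.single j (1:ℝ)) := fun j => hQnonneg _
  set s : Fin p → ℝ := fun j => (v j - C.mulVec m j) / (lam * w j) with hs
  have hlw : ∀ j, (0:ℝ) < lam * w j := fun j => mul_pos hlam (hw j)
  have hsub : IsL1Subgradient s m := by
    intro j
    constructor
    · intro hj
      have hδ : 0 < |m j| := abs_pos.mpr hj
      set σ := Real.sign (m j) with hσ
      have hE1 : 0 ≤ a j + lam * w j * σ := by
        refine aux_nonneg_of_small (hq0 j) hδ fun t ht0 htδ => ?_
        have hk := key j t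
        rw [aux_abs hj (by rw [abs_of_pos ht0]; exact htδ)] at hk
        nlinarith [hk]
      have hE2 : 0 ≤ -(a j + lam * w j * σ) := by
        refine aux_nonneg_of_small (hq0 j) hδ fun t ht0 htδ => ?_
        have hk := key j (-t)
        rw [aux_abs hj (by rw [abs_neg, abs_of_pos ht0]; exact htδ)] at hk
        nlinarith [hk]
      have hE : a j + lam * w j * σ = 0 := le_antisymm (by linarith) hE1
      have hnum : v j - C.mulVec m j = lam * w j * σ := by
        simp only [ha] at hE; linarith
      simp only [hs]
      rw [hnum]
      exact mul_div_cancel_left₀ σ (hlw j).ne'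
    · intro hj
      have h1 : 0 ≤ a j + lam * w j := by
        refine aux_nonneg_of_small (hq0 j) one_pos fun t ht0 _ => ?_
        have hk := key j t
        rw [hj] at hk
        rw [zero_add, abs_zero, abs_of_pos ht0, sub_zero] at hk
        nlinarith [hk]
      have h2 : 0 ≤ -(a j - lam * w j) := by
        refine aux_nonneg_of_small (hq0 j) one_pos fun t ht0 _ => ?_
        have hk := key j (-t)
        rw [hj] at hk
        rw [zero_add, abs_zero, abs_neg, abs_of_pos ht0, sub_zero] at hk
        nlinarith [hk]
      simp only [hs]
      rw [abs_div, abs_of_pos (hlw j), div_le_one (hlw j), abs_le]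
      simp only [ha] at h1 h2
      constructor <;> linarith
  have heqn : ∀ j, C.mulVec m j + lam * w j * s j = v j := by
    intro j
    simp only [hs]
    rw [mul_comm (lam * w j), div_mul_cancel₀ _ (hlw j).ne']
    ring
  refine ⟨⟨m, s⟩, ⟨hsub, (hiff m s).mpr heqn⟩, ?_⟩
  rintro ⟨b', s'⟩ ⟨hsub', heq'⟩
  obtain ⟨h1, h2⟩ := huniq b' s' m s hsub' hsub ((hiff b' s').mp heq') heqn
  simp only [Prod.mk.injEq]
  exact ⟨h1, h2⟩
end

section
/- Consider the linear model y = Xβ₀ + ε with X a fixed n×p real matrix of rank p ≤ n, so that for every y the minimizer β̂(y) of the weighted Lasso loss ℓ is unique; let S(y) be its subgradient and 𝒜(y) = supp(β̂(y)). Assume U = Xᵀε/n has a probability density f_U with respect to Lebesgue measure on R^p. Then for every A ⊆ {1,…,p} with complement I and every Borel set B ⊆ R^{|A|} × R^{|I|}: P((β̂_A, S_I) ∈ B and 𝒜 = A) = ∫_{B ∩ Ω_A} f_U(H(b_A, s_I, A; β₀)) |det D(A)| d(b_A, s_I), where the integral is with respect to p-dimensional Lebesgue measure, Ω_A = {(b_A,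 s_I) : b_j ≠ 0 for all j ∈ A, s_I ∈ [−1,1]^{|I|}}, H(b_A, s_I, A; β) = C_A b_A + λ W_A sgn(b_A) + λ W_I s_I − Cβ, and D(A) = (C_A | λ W_I). -/
open Matrix MeasureTheory

/-- The matrix `D(A) = (C_A | λ W_I)`. -/
def Dmat {p : ℕ} (C : Matrix (Fin p) (Fin p) ℝ) (w : Fin p → ℝ) (lam : ℝ)
    (A : Finset (Fin p)) : Matrix (Fin p) (Fin p) ℝ :=
  fun i j => if j ∈ A then C i j else if i = j then lam * w j else 0

/-- The map `H(b_A, s_I, A; β) = C_A b_A + λ W_A sgn(b_A) + λ W_I s_I − Cβ`, acting on the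
combined coordinate vector `z` (with `z_j = b_j` for `j ∈ A` and `z_j = s_j` for `j ∉ A`). -/
noncomputable def Hmap {p : ℕ} (C : Matrix (Fin p) (Fin p) ℝ) (w : Fin p → ℝ) (lam : ℝ)
    (A : Finset (Fin p)) (β : Fin p → ℝ) (z : Fin p → ℝ) : Fin p → ℝ :=
  C.mulVec (fun j => if j ∈ A then z j else 0)
    + (fun j => lam * w j * (if j ∈ A then Real.sign (z j) else z j))
    - C.mulVec β

/-! ### Auxiliary lemmas -/

lemma AugLasso.sign_mul_self' (x : ℝ) : Real.sign x * x = |x| := by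
  rcases lt_trichotomy x 0 with h|h|h
  · rw [Real.sign_of_neg h, abs_of_neg h]; ring
  · simp [h]
  · rw [Real.sign_of_pos h, abs_of_pos h]; ring

lemma AugLasso.abs_sign_le_one' (x : ℝ) : |Real.sign x| ≤ 1 := by
  rcases lt_trichotomy x 0 with h|h|h
  · rw [Real.sign_of_neg h]; norm_num
  · simp [h]
  · rw [Real.sign_of_pos h]; norm_num

lemma AugLasso.subgrad_mono' {s a s' a' : ℝ} (h : s * a = |a|) (h' : s' * a' = |a'|)
    (hs : |s| ≤ 1) (hs' : |s'| ≤ 1) : 0 ≤ (s - s') * (a - a') := by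
  have h1 : s * a' ≤ |a'| := by
    calc s * a' ≤ |s * a'| := le_abs_self _
    _ = |s| * |a'| := abs_mul _ _
    _ ≤ 1 * |a'| := by gcongr
    _ = |a'| := one_mul _
  have h2 : s' * a ≤ |a| := by
    calc s' * a ≤ |s' * a| := le_abs_self _
    _ = |s'| * |a| := abs_mul _ _
    _ ≤ 1 * |a| := by gcongr
    _ = |a| := one_mul _
  nlinarith

lemma AugLasso.abs_subgrad' {b s b' : ℝ} (h1 : b ≠ 0 → s = Real.sign b)
    (h2 : b = 0 → |s| ≤ 1) : |b| + s * (b' - b) ≤ |b'| := by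
  rcases eq_or_ne b 0 with hb | hb
  · subst hb
    have hs := h2 rfl
    have h3 : s * b' ≤ |b'| := by
      calc s * b' ≤ |s * b'| := le_abs_self _
      _ = |s| * |b'| := abs_mul _ _
      _ ≤ 1 * |b'| := by gcongr
      _ = |b'| := one_mul _
    simpa using h3
  · rw [h1 hb]
    have := AugLasso.sign_mul_self' b
    have h4 : Real.sign b * b' ≤ |b'| := by
      calc Real.sign b * b' ≤ |Real.sign b * b'| := le_abs_self _
      _ = |Real.sign b| * |b'| := abs_mul _ _
      _ ≤ 1 * |b'| := by gcongr; exact AugLasso.abs_sign_le_one' b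
      _ = |b'| := one_mul _
    nlinarith

/-- The KKT conditions are sufficient for global minimality of the weighted Lasso loss. -/
lemma AugLasso.kkt_implies_min {n p : ℕ} (hn : p = 0 ∨ 0 < n)
    (X : Matrix (Fin n) (Fin p) ℝ) (w : Fin p → ℝ) (hw : ∀ j, 0 < w j)
    (lam : ℝ) (hlam : 0 ≤ lam) (y : Fin n → ℝ) (b s : Fin p → ℝ)
    (hsg : IsL1Subgradient s b)
    (hk : ∀ j, (n : ℝ)⁻¹ * Xᵀ.mulVec y j =
      ((n : ℝ)⁻¹ • (Xᵀ * X)).mulVec b j + lam * w j * s j) :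
    ∀ b', lassoLoss X y w lam b ≤ lassoLoss X y w lam b' := by
  intro b'
  rcases hn with hp | hn
  · subst hp
    have hb : b = b' := funext fun j => j.elim0
    rw [hb]
  have hnne : (n : ℝ) ≠ 0 := Nat.cast_ne_zero.mpr hn.ne'
  set a : Fin n → ℝ := fun i => y i - X.mulVec b i with ha
  set c : Fin n → ℝ := X.mulVec (b' - b) with hc
  have key1 : ∀ i, y i - X.mulVec b' i = a i - c i := by
    intro i
    have : X.mulVec b' = X.mulVec b + X.mulVec (b' - b) := by
      rw [← Matrix.mulVec_add, add_sub_cancel]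
    rw [this]
    simp [ha, hc]
    ring
  have hkj : ∀ j, Xᵀ.mulVec y j - (Xᵀ * X).mulVec b j = n * (lam * (w j * s j)) := by
    intro j
    have h := hk j
    rw [Matrix.smul_mulVec] at h
    simp only [Pi.smul_apply, smul_eq_mul] at h
    field_simp at h
    linarith
  have key2 : ∑ i, a i * c i = n * lam * ∑ j, w j * (s j * (b' j - b j)) := by
    have e1 : ∑ i, a i * c i = a ⬝ᵥ X.mulVec (b' - b) := by simp [dotProduct, hc]
    rw [e1, Matrix.dotProduct_mulVec, ← Matrix.mulVec_transpose]
    have e2 : Xᵀ.mulVec a = fun j => n * (lam * (w j * s j)) := by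
      funext j
      have : Xᵀ.mulVec a j = Xᵀ.mulVec y j - Xᵀ.mulVec (X.mulVec b) j := by
        have : a = y - X.mulVec b := by funext i; simp [ha]
        rw [this, Matrix.mulVec_sub]
        simp
      rw [this, Matrix.mulVec_mulVec]
      exact hkj j
    rw [e2]
    simp only [dotProduct]
    rw [Finset.mul_sum]
    exact Finset.sum_congr rfl fun j _ => by simp only [Pi.sub_apply]; ring
  have habs : ∀ j, 0 ≤ w j * (|b' j| - |b j| - s j * (b' j - b j)) := by
    intro j
    have := AugLasso.abs_subgrad' (b' := b' j) (hsg j).1 (hsg j).2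
    have := (hw j).le
    nlinarith
  have e1 : ∑ i, (y i - X.mulVec b' i) ^ 2
      = ∑ i, ((a i) ^ 2 - 2 * (a i * c i) + (c i) ^ 2) :=
    Finset.sum_congr rfl fun i _ => by rw [key1 i]; ring
  have e1' : ∑ i, ((a i) ^ 2 - 2 * (a i * c i) + (c i) ^ 2)
      = ∑ i, (a i) ^ 2 - 2 * ∑ i, a i * c i + ∑ i, (c i) ^ 2 := by
    rw [Finset.sum_add_distrib, Finset.sum_sub_distrib, Finset.mul_sum]
  have hsplit : ∑ j, w j * (|b' j| - |b j| - s j * (b' j - b j))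
      = ∑ j, w j * |b' j| - ∑ j, w j * |b j| - ∑ j, w j * (s j * (b' j - b j)) := by
    rw [← Finset.sum_sub_distrib, ← Finset.sum_sub_distrib]
    exact Finset.sum_congr rfl fun j _ => by ring
  have hnn : 0 ≤ ∑ i, (c i) ^ 2 := Finset.sum_nonneg fun i _ => sq_nonneg _
  have hnn2 : 0 ≤ ∑ j, w j * (|b' j| - |b j| - s j * (b' j - b j)) :=
    Finset.sum_nonneg fun j _ => habs j
  have hnl : (0:ℝ) ≤ n := Nat.cast_nonneg n
  have hprod : 0 ≤ (n * lam) *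
      (∑ j, w j * |b' j| - ∑ j, w j * |b j| - ∑ j, w j * (s j * (b' j - b j))) := by
    apply mul_nonneg (mul_nonneg hnl hlam)
    rw [← hsplit]; exact hnn2
  simp only [lassoLoss, e1, e1']
  have hy : ∀ i, y i - X.mulVec b i = a i := fun i => rfl
  simp only [hy]
  nlinarith [key2, hnn, hprod]

lemma AugLasso.mulVec_inj {n p : ℕ} (X : Matrix (Fin n) (Fin p) ℝ) (hrank : X.rank = p) :
    ∀ v : Fin p → ℝ, X.mulVec v = 0 → v = 0 := by
  intro v hv
  have h2 := LinearMap.finrank_range_add_finrank_ker X.mulVecLin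
  have h1 : Module.finrank ℝ (LinearMap.range X.mulVecLin) = p := hrank
  have h3 : Module.finrank ℝ (Fin p → ℝ) = p := by simp
  rw [h1, h3] at h2
  have h4 : Module.finrank ℝ (LinearMap.ker X.mulVecLin) = 0 := by omega
  have h5 : LinearMap.ker X.mulVecLin = ⊥ := Submodule.finrank_eq_zero.mp h4
  have h6 : X.mulVecLin v = 0 := hv
  have := LinearMap.ker_eq_bot.mp h5
  exact this (by simpa using h6)

/-- `Hmap` is injective when `C = XᵀX/n` is positive definite. -/
lemma AugLasso.hmap_injective {n p : ℕ} (hn : p = 0 ∨ 0 < n) (X : Matrix (Fin n) (Fin p) ℝ)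
    (hrank : X.rank = p) (w : Fin p → ℝ) (hw : ∀ j, 0 < w j) (lam : ℝ) (hlam : 0 < lam)
    (A : Finset (Fin p)) (β₀ : Fin p → ℝ) :
    Function.Injective (Hmap ((n : ℝ)⁻¹ • (Xᵀ * X)) w lam A β₀) := by
  intro z z' he
  rcases hn with hp | hn
  · subst hp; exact funext fun j => j.elim0
  have hnpos : (0:ℝ) < n := by exact_mod_cast hn
  set C := (n : ℝ)⁻¹ • (Xᵀ * X) with hC
  set b : Fin p → ℝ := fun j => if j ∈ A then z j else 0 with hb
  set b' : Fin p → ℝ := fun j => if j ∈ A then z' j else 0 with hb'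
  set sv : Fin p → ℝ := fun j => if j ∈ A then Real.sign (z j) else z j with hsv
  set sv' : Fin p → ℝ := fun j => if j ∈ A then Real.sign (z' j) else z' j with hsv'
  have hpt : ∀ j, C.mulVec b j + lam * w j * sv j = C.mulVec b' j + lam * w j * sv' j := by
    intro j
    have := congrFun he j
    simp only [Hmap, Pi.add_apply, Pi.sub_apply] at this
    linarith
  set v : Fin p → ℝ := b - b' with hv
  have hterm : ∀ j, 0 ≤ (sv j - sv' j) * v j := by
    intro j
    by_cases hj : j ∈ A
    · have : v j = z j - z' j := by simp [hv, hb, hb', hj]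
      rw [this]
      simp only [hsv, hsv', if_pos hj]
      exact AugLasso.subgrad_mono' (AugLasso.sign_mul_self' (z j))
        (AugLasso.sign_mul_self' (z' j)) (AugLasso.abs_sign_le_one' _)
        (AugLasso.abs_sign_le_one' _)
    · have : v j = 0 := by simp [hv, hb, hb', hj]
      rw [this]; simp
  have hdot : ∑ j, v j * C.mulVec v j + lam * ∑ j, w j * ((sv j - sv' j) * v j) = 0 := by
    have : ∀ j, v j * C.mulVec v j + lam * (w j * ((sv j - sv' j) * v j)) = 0 := by
      intro j
      have h1 : C.mulVec v j = C.mulVec b j - C.mulVec b' j := by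
        rw [hv, Matrix.mulVec_sub]; simp
      have h2 := hpt j
      have h3 : v j = b j - b' j := by simp [hv]
      rw [h1, h3]
      simp only [hsv, hsv'] at h2 ⊢
      linear_combination (b j - b' j) * h2
    rw [Finset.mul_sum, ← Finset.sum_add_distrib]
    exact Finset.sum_eq_zero fun j _ => this j
  have hquad : ∑ j, v j * C.mulVec v j = (n:ℝ)⁻¹ * ((X.mulVec v) ⬝ᵥ (X.mulVec v)) := by
    have e0 : ∑ j, v j * C.mulVec v j = v ⬝ᵥ C.mulVec v := rfl
    rw [e0, hC, Matrix.smul_mulVec, dotProduct_smul, ← Matrix.mulVec_mulVec,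
      Matrix.dotProduct_mulVec, Matrix.vecMul_transpose]
    simp
  have hquad_nn : 0 ≤ ∑ j, v j * C.mulVec v j := by
    rw [hquad]
    exact mul_nonneg (by positivity)
      (Finset.sum_nonneg fun i _ => mul_self_nonneg _)
  have hsum_nn : 0 ≤ lam * ∑ j, w j * ((sv j - sv' j) * v j) :=
    mul_nonneg hlam.le (Finset.sum_nonneg fun j _ => mul_nonneg (hw j).le (hterm j))
  have hq0 : ∑ j, v j * C.mulVec v j = 0 := le_antisymm (by linarith) hquad_nn
  have hXv : X.mulVec v = 0 := by
    rw [hquad] at hq0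
    have hne : (n:ℝ)⁻¹ ≠ 0 := by positivity
    have h1 : (X.mulVec v) ⬝ᵥ (X.mulVec v) = 0 := (mul_eq_zero.mp hq0).resolve_left hne
    funext i
    have hall := Finset.sum_eq_zero_iff_of_nonneg
      (fun i (_ : i ∈ Finset.univ) => mul_self_nonneg (X.mulVec v i)) |>.mp h1
    have h2 := hall i (Finset.mem_univ i)
    have h3 := mul_self_eq_zero.mp h2
    simpa using h3
  have hveq : v = 0 := AugLasso.mulVec_inj X hrank v hXv
  have hbeq : b = b' := by
    have : b - b' = 0 := hveq
    funext j; have := congrFun this j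
    simp only [Pi.sub_apply, Pi.zero_apply] at this; linarith
  have hseq : ∀ j, sv j = sv' j := by
    intro j
    have h2 := hpt j
    rw [hbeq] at h2
    have hwj := (hw j).ne'
    have : lam * w j * sv j = lam * w j * sv' j := by linarith
    have hl : lam * w j ≠ 0 := mul_ne_zero hlam.ne' hwj
    exact mul_left_cancel₀ hl this
  funext j
  by_cases hj : j ∈ A
  · have h1 : b j = b' j := congrFun hbeq j
    simpa [hb, hb', hj] using h1
  · have h1 := hseq j
    simpa [hsv, hsv', hj] using h1

/-- The derivative of `Hmap` (on the region where the `A`-coordinates are nonzero),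
as a continuous linear map. -/
noncomputable def AugLasso.Dclm {p : ℕ} (C : Matrix (Fin p) (Fin p) ℝ) (w : Fin p → ℝ)
    (lam : ℝ) (A : Finset (Fin p)) : (Fin p → ℝ) →L[ℝ] (Fin p → ℝ) :=
  LinearMap.toContinuousLinearMap (Matrix.toLin' (Dmat C w lam A))

lemma AugLasso.Dclm_det {p : ℕ} (C : Matrix (Fin p) (Fin p) ℝ) (w : Fin p → ℝ) (lam : ℝ)
    (A : Finset (Fin p)) : (AugLasso.Dclm C w lam A).det = (Dmat C w lam A).det := by
  rw [ContinuousLinearMap.det, AugLasso.Dclm, LinearMap.coe_toContinuousLinearMap,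
    LinearMap.det_toLin']

lemma AugLasso.Dmat_split {p : ℕ} (C : Matrix (Fin p) (Fin p) ℝ) (w : Fin p → ℝ) (lam : ℝ)
    (A : Finset (Fin p)) :
    Dmat C w lam A = Matrix.of (fun i j => if j ∈ A then C i j else 0)
      + Matrix.diagonal (fun j => if j ∈ A then 0 else lam * w j) := by
  funext i j
  simp only [Dmat, Matrix.add_apply, Matrix.diagonal_apply]
  by_cases hj : j ∈ A <;> by_cases hij : i = j <;> simp [hj, hij]

lemma AugLasso.hmap_eq_affine {p : ℕ} (C : Matrix (Fin p) (Fin p) ℝ) (w : Fin p → ℝ)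
    (lam : ℝ) (A : Finset (Fin p)) (β₀ : Fin p → ℝ) (σ : Fin p → ℝ) (z : Fin p → ℝ)
    (hσ : ∀ j ∈ A, Real.sign (z j) = σ j) :
    Hmap C w lam A β₀ z = (Dmat C w lam A).mulVec z
      + ((fun i => if i ∈ A then lam * w i * σ i else 0) - C.mulVec β₀) := by
  funext i
  rw [AugLasso.Dmat_split, Matrix.add_mulVec]
  simp only [Hmap, Pi.add_apply, Pi.sub_apply, Matrix.mulVec_diagonal]
  have e1 : ((Matrix.of fun i j => if j ∈ A then C i j else 0) :
        Matrix (Fin p) (Fin p) ℝ).mulVec z i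
      = C.mulVec (fun j => if j ∈ A then z j else 0) i := by
    simp only [Matrix.mulVec, dotProduct, Matrix.of_apply]
    exact Finset.sum_congr rfl fun j _ => by by_cases hj : j ∈ A <;> simp [hj]
  rw [e1]
  by_cases hi : i ∈ A
  · simp [hi, hσ i hi]
    ring
  · simp [hi]
    ring

lemma AugLasso.hmap_hasFDerivAt {p : ℕ} (C : Matrix (Fin p) (Fin p) ℝ) (w : Fin p → ℝ)
    (lam : ℝ) (A : Finset (Fin p)) (β₀ : Fin p → ℝ) (z : Fin p → ℝ)
    (hz : ∀ j ∈ A, z j ≠ 0) :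
    HasFDerivAt (Hmap C w lam A β₀) (AugLasso.Dclm C w lam A) z := by
  set c : Fin p → ℝ := (fun i => if i ∈ A then lam * w i * Real.sign (z i) else 0) - C.mulVec β₀
  have hG : HasFDerivAt (fun z' => (Dmat C w lam A).mulVec z' + c)
      (AugLasso.Dclm C w lam A) z := by
    have h1 : HasFDerivAt (fun z' => (AugLasso.Dclm C w lam A) z')
        (AugLasso.Dclm C w lam A) z := (AugLasso.Dclm C w lam A).hasFDerivAt
    have h2 : (fun z' => (AugLasso.Dclm C w lam A) z')
        = fun z' => (Dmat C w lam A).mulVec z' := by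
      funext z'
      simp [AugLasso.Dclm, Matrix.toLin'_apply]
    rw [h2] at h1
    exact h1.add_const c
  apply hG.congr_of_eventuallyEq
  have hev : ∀ᶠ z' in nhds z, ∀ j ∈ A, Real.sign (z' j) = Real.sign (z j) := by
    rw [Filter.eventually_all_finset]
    intro j hj
    rcases lt_or_gt_of_ne (hz j hj) with h | h
    · have hopen : IsOpen {v : Fin p → ℝ | v j < 0} :=
        isOpen_lt (continuous_apply j) continuous_const
      filter_upwards [hopen.mem_nhds h] with v hv
      rw [Real.sign_of_neg hv, Real.sign_of_neg h]
    · have hopen : IsOpen {v : Fin p → ℝ | 0 < v j} :=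
        isOpen_lt continuous_const (continuous_apply j)
      filter_upwards [hopen.mem_nhds h] with v hv
      rw [Real.sign_of_pos hv, Real.sign_of_pos h]
  filter_upwards [hev] with z' hsign
  exact AugLasso.hmap_eq_affine C w lam A β₀ (fun j => Real.sign (z j)) z' hsign

/-- Change-of-variables formula for the joint sampling distribution of the augmented Lasso
estimator `(β̂_A, S_I, 𝒜 = A)` in the low-dimensional setting, in terms of the density `f_U`
of `U = Xᵀε/n`. -/
theorem augmented_estimator_density_low_dim {n p : ℕ}
    (X : Matrix (Fin n) (Fin p) ℝ) (hpn : p ≤ n) (hrank : X.rank = p)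
    (w : Fin p → ℝ) (hw : ∀ j, 0 < w j) (lam : ℝ) (hlam : 0 < lam)
    (β₀ : Fin p → ℝ)
    (Ω : Type*) [MeasurableSpace Ω] (ℙ : Measure Ω) [IsProbabilityMeasure ℙ]
    (ε : Ω → Fin n → ℝ) (hε : Measurable ε)
    -- the Lasso estimator and its subgradient, as (unique) minimizer of the loss for each y
    (bhat Shat : (Fin n → ℝ) → (Fin p → ℝ))
    (hmin : ∀ y b, lassoLoss X y w lam (bhat y) ≤ lassoLoss X y w lam b)
    (huniq : ∀ y b, (∀ b', lassoLoss X y w lam b ≤ lassoLoss X y w lam b') → b = bhat y)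
    (hsub : ∀ y, IsL1Subgradient (Shat y) (bhat y))
    (hKKT : ∀ y, (fun j => (n : ℝ)⁻¹ * Xᵀ.mulVec y j) =
      ((n : ℝ)⁻¹ • (Xᵀ * X)).mulVec (bhat y) + fun j => lam * w j * Shat y j)
    -- `U = Xᵀε/n` has density `fU` with respect to Lebesgue measure on ℝ^p
    (fU : (Fin p → ℝ) → ℝ) (hfU0 : ∀ u, 0 ≤ fU u)
    (hfU : ∀ s : Set (Fin p → ℝ), MeasurableSet s →
      ℙ {ω | (fun j => (n : ℝ)⁻¹ * Xᵀ.mulVec (ε ω) j) ∈ s} =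
        ∫⁻ u in s, ENNReal.ofReal (fU u)) :
    ∀ A : Finset (Fin p), ∀ B : Set (Fin p → ℝ), MeasurableSet B →
      ℙ {ω | (fun j => if j ∈ A then bhat (X.mulVec β₀ + ε ω) j
                else Shat (X.mulVec β₀ + ε ω) j) ∈ B ∧
             (∀ j, bhat (X.mulVec β₀ + ε ω) j ≠ 0 ↔ j ∈ A)} =
      ∫⁻ z in B ∩ {z | (∀ j ∈ A, z j ≠ 0) ∧ (∀ j ∉ A, |z j| ≤ 1)},
        ENNReal.ofReal
          (fU (Hmap ((n : ℝ)⁻¹ • (Xᵀ * X)) w lam A β₀ z) *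
            |(Dmat ((n : ℝ)⁻¹ • (Xᵀ * X)) w lam A).det|) := by
  intro A B hB
  have hn01 : p = 0 ∨ 0 < n := by
    rcases Nat.eq_zero_or_pos p with h | h
    · exact Or.inl h
    · exact Or.inr (lt_of_lt_of_le h hpn)
  set C := (n : ℝ)⁻¹ • (Xᵀ * X) with hCdef
  set Oms : Set (Fin p → ℝ) := {z | (∀ j ∈ A, z j ≠ 0) ∧ (∀ j ∉ A, |z j| ≤ 1)} with hOdef
  have hOm : MeasurableSet Oms := by
    have hrepr : Oms = (⋂ j, {z : Fin p → ℝ | j ∈ A → z j ≠ 0})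
        ∩ ⋂ j, {z : Fin p → ℝ | j ∉ A → |z j| ≤ 1} := by
      ext z
      simp only [hOdef, Set.mem_setOf_eq, Set.mem_inter_iff, Set.mem_iInter]
    rw [hrepr]
    apply MeasurableSet.inter <;> refine MeasurableSet.iInter fun j => ?_
    · by_cases hj : j ∈ A
      · have : {z : Fin p → ℝ | j ∈ A → z j ≠ 0}
            = (fun z : Fin p → ℝ => z j) ⁻¹' ({0}ᶜ) := by
          ext z; simp [hj]
        rw [this]
        exact measurable_pi_apply j (measurableSet_singleton (0:ℝ)).compl
      · have : {z : Fin p → ℝ | j ∈ A → z j ≠ 0} = Set.univ := by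
          ext z; simp [hj]
        rw [this]; exact MeasurableSet.univ
    · by_cases hj : j ∈ A
      · have : {z : Fin p → ℝ | j ∉ A → |z j| ≤ 1} = Set.univ := by
          ext z; simp [hj]
        rw [this]; exact MeasurableSet.univ
      · have : {z : Fin p → ℝ | j ∉ A → |z j| ≤ 1}
            = (fun z : Fin p → ℝ => z j) ⁻¹' {x : ℝ | |x| ≤ 1} := by
          ext z; simp [hj]
        rw [this]
        exact measurable_pi_apply j (measurableSet_le (measurable_abs) measurable_const)
  have hsm : MeasurableSet (B ∩ Oms) := hB.inter hOm
  have hf' : ∀ z ∈ B ∩ Oms, HasFDerivWithinAt (Hmap C w lam A β₀)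
      (AugLasso.Dclm C w lam A) (B ∩ Oms) z :=
    fun z hz => (AugLasso.hmap_hasFDerivAt C w lam A β₀ z hz.2.1).hasFDerivWithinAt
  have hinj : Set.InjOn (Hmap C w lam A β₀) (B ∩ Oms) :=
    (AugLasso.hmap_injective hn01 X hrank w hw lam hlam A β₀).injOn
  have himg : MeasurableSet (Hmap C w lam A β₀ '' (B ∩ Oms)) :=
    measurable_image_of_fderivWithin hsm hf' hinj
  have hUy : ∀ ω', (fun j => (n:ℝ)⁻¹ * Xᵀ.mulVec (X.mulVec β₀ + ε ω') j)
      = C.mulVec β₀ + fun j => (n:ℝ)⁻¹ * Xᵀ.mulVec (ε ω') j := by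
    intro ω'; funext j
    have h1 : Xᵀ.mulVec (X.mulVec β₀ + ε ω') = (Xᵀ * X).mulVec β₀ + Xᵀ.mulVec (ε ω') := by
      rw [Matrix.mulVec_add, Matrix.mulVec_mulVec]
    rw [h1]
    simp only [Pi.add_apply, hCdef, Matrix.smul_mulVec, Pi.smul_apply, smul_eq_mul]
    ring
  have hev : {ω | (fun j => if j ∈ A then bhat (X.mulVec β₀ + ε ω) j
                else Shat (X.mulVec β₀ + ε ω) j) ∈ B ∧
             (∀ j, bhat (X.mulVec β₀ + ε ω) j ≠ 0 ↔ j ∈ A)}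
      = {ω | (fun j => (n : ℝ)⁻¹ * Xᵀ.mulVec (ε ω) j) ∈ Hmap C w lam A β₀ '' (B ∩ Oms)} := by
    ext ω
    simp only [Set.mem_setOf_eq]
    constructor
    · rintro ⟨hzB, hsupp⟩
      refine ⟨fun j => if j ∈ A then bhat (X.mulVec β₀ + ε ω) j
        else Shat (X.mulVec β₀ + ε ω) j, ⟨hzB, ?_, ?_⟩, ?_⟩
      · intro j hj
        simp only [if_pos hj]
        exact (hsupp j).mpr hj
      · intro j hj
        simp only [if_neg hj]
        have hb0 : bhat (X.mulVec β₀ + ε ω) j = 0 := by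
          by_contra h; exact hj ((hsupp j).mp h)
        exact ((hsub _) j).2 hb0
      · have e1 : (fun j => if j ∈ A then
            (if j ∈ A then bhat (X.mulVec β₀ + ε ω) j else Shat (X.mulVec β₀ + ε ω) j)
            else 0) = bhat (X.mulVec β₀ + ε ω) := by
          funext j
          by_cases hj : j ∈ A
          · simp [hj]
          · simp only [if_neg hj]
            symm
            by_contra h; exact hj ((hsupp j).mp h)
        have e2 : (fun j => lam * w j * (if j ∈ A then
            Real.sign (if j ∈ A then bhat (X.mulVec β₀ + ε ω) j
              else Shat (X.mulVec β₀ + ε ω) j)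
            else (if j ∈ A then bhat (X.mulVec β₀ + ε ω) j
              else Shat (X.mulVec β₀ + ε ω) j)))
            = fun j => lam * w j * Shat (X.mulVec β₀ + ε ω) j := by
          funext j
          by_cases hj : j ∈ A
          · simp only [if_pos hj]
            rw [← ((hsub _) j).1 ((hsupp j).mpr hj)]
          · simp [hj]
        show Hmap C w lam A β₀ _ = _
        simp only [Hmap]
        rw [e1, e2, ← hKKT (X.mulVec β₀ + ε ω), hUy ω, add_sub_cancel_left]
    · rintro ⟨z, ⟨hzB, hzO⟩, hHz⟩
      have hzO1 : ∀ j ∈ A, z j ≠ 0 := hzO.1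
      have hzO2 : ∀ j ∉ A, |z j| ≤ 1 := hzO.2
      have hsg : IsL1Subgradient (fun j => if j ∈ A then Real.sign (z j) else z j)
          (fun j => if j ∈ A then z j else 0) := by
        intro j
        constructor
        · intro hbj
          by_cases hj : j ∈ A
          · simp [hj]
          · exact absurd (by simp [hj]) hbj
        · intro hbj
          by_cases hj : j ∈ A
          · exact absurd (by simpa [hj] using hbj) (hzO1 j hj)
          · simpa [hj] using hzO2 j hj
      have hk : ∀ j, (n : ℝ)⁻¹ * Xᵀ.mulVec (X.mulVec β₀ + ε ω) j =
          C.mulVec (fun j => if j ∈ A then z j else 0) j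
            + lam * w j * (if j ∈ A then Real.sign (z j) else z j) := by
        intro j
        have h1 := congrFun (hUy ω) j
        have h2 := congrFun hHz j
        simp only [Hmap, Pi.add_apply, Pi.sub_apply] at h2
        simp only [Pi.add_apply] at h1
        rw [h1, ← h2]
        ring
      have hbmin := AugLasso.kkt_implies_min hn01 X w hw lam hlam.le
        (X.mulVec β₀ + ε ω) _ _ hsg hk
      have hbeq : (fun j => if j ∈ A then z j else 0) = bhat (X.mulVec β₀ + ε ω) :=
        huniq _ _ hbmin
      have hseq : ∀ j, Shat (X.mulVec β₀ + ε ω) j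
          = (if j ∈ A then Real.sign (z j) else z j) := by
        intro j
        have h3 := congrFun (hKKT (X.mulVec β₀ + ε ω)) j
        simp only [Pi.add_apply] at h3
        rw [← hbeq] at h3
        have h4 := hk j
        have hlw : lam * w j ≠ 0 := mul_ne_zero hlam.ne' (hw j).ne'
        have h5 : lam * w j * Shat (X.mulVec β₀ + ε ω) j
            = lam * w j * (if j ∈ A then Real.sign (z j) else z j) := by
          linarith
        exact mul_left_cancel₀ hlw h5
      have hzeq : (fun j => if j ∈ A then bhat (X.mulVec β₀ + ε ω) j
          else Shat (X.mulVec β₀ + ε ω) j) = z := by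
        funext j
        by_cases hj : j ∈ A
        · rw [if_pos hj, ← hbeq]; simp [hj]
        · rw [if_neg hj, hseq j]; simp [hj]
      constructor
      · rw [hzeq]; exact hzB
      · intro j
        constructor
        · intro hne
          by_contra hj
          apply hne
          rw [← hbeq]
          simp [hj]
        · intro hj
          rw [← hbeq]
          simpa [hj] using hzO1 j hj
  calc ℙ {ω | (fun j => if j ∈ A then bhat (X.mulVec β₀ + ε ω) j
                else Shat (X.mulVec β₀ + ε ω) j) ∈ B ∧
             (∀ j, bhat (X.mulVec β₀ + ε ω) j ≠ 0 ↔ j ∈ A)}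
      = ℙ {ω | (fun j => (n : ℝ)⁻¹ * Xᵀ.mulVec (ε ω) j)
          ∈ Hmap C w lam A β₀ '' (B ∩ Oms)} := by rw [hev]
    _ = ∫⁻ u in Hmap C w lam A β₀ '' (B ∩ Oms), ENNReal.ofReal (fU u) := hfU _ himg
    _ = ∫⁻ z in B ∩ Oms, ENNReal.ofReal |(AugLasso.Dclm C w lam A).det|
          * ENNReal.ofReal (fU (Hmap C w lam A β₀ z)) :=
        lintegral_image_eq_lintegral_abs_det_fderiv_mul volume hsm hf' hinj _
    _ = ∫⁻ z in B ∩ Oms, ENNReal.ofReal (fU (Hmap C w lam A β₀ z)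
          * |(Dmat C w lam A).det|) := by
        refine lintegral_congr fun z => ?_
        rw [AugLasso.Dclm_det, mul_comm, ← ENNReal.ofReal_mul (hfU0 _)]
end

section
/- Let X be an n×p real matrix with rank(X) = p, C = XᵀX/n (invertible), W = diag(w_1,…,w_p) with all w_j > 0, λ > 0, and define the loss ℓ_B(η, β) = (1/2)(η − β)ᵀC(η − β) + λ Σ_j w_j|η_j| for η, β ∈ R^p. Let μ be a probability measure on R^p with mean m = ∫β dμ(β) and ∫‖β‖₂² dμ(β) < ∞. Then η* minimizes η ↦ ∫ℓ_B(η, β) dμ(β) if and only if there exists a subgradient s of the ℓ₁ norm at η* with Cη* + λWs = Cm. In particular, if m = (XᵀX)^{-1}Xᵀy (the ordinary least-squares estimate), then η* equals the unique minimizer of the weighted Lasso loss ℓ(b) = (1/2)‖y − Xb‖₂² + nλ Σ_j w_j|b_j|. -/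
open Matrix MeasureTheory

/-- The Bayesian decision loss `ℓ_B(η, β) = (1/2)(η − β)ᵀC(η − β) + λ Σ_j w_j|η_j|`. -/
noncomputable def bayesLoss {p : ℕ} (C : Matrix (Fin p) (Fin p) ℝ) (w : Fin p → ℝ)
    (lam : ℝ) (η β : Fin p → ℝ) : ℝ :=
  (1 / 2) * dotProduct (η - β) (C.mulVec (η - β)) + lam * ∑ j, w j * |η j|

namespace LassoAux

variable {p : ℕ}

/-- The essential finite-dimensional objective. -/
noncomputable def gQ (C : Matrix (Fin p) (Fin p) ℝ) (v w : Fin p → ℝ) (lam : ℝ)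
    (η : Fin p → ℝ) : ℝ :=
  (1 / 2) * dotProduct η (C.mulVec η) - dotProduct v η + lam * ∑ j, w j * |η j|

lemma abs_sign_le (x : ℝ) : |Real.sign x| ≤ 1 := by
  rcases lt_trichotomy x 0 with h | h | h
  · rw [Real.sign_of_neg h]; norm_num
  · simp [h]
  · rw [Real.sign_of_pos h]; norm_num

lemma sign_mul_self (x : ℝ) : Real.sign x * x = |x| := by
  rcases lt_trichotomy x 0 with h | h | h
  · rw [Real.sign_of_neg h, abs_of_neg h]; ring
  · simp [h]
  · rw [Real.sign_of_pos h, abs_of_pos h]; ring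

lemma dot_symm {C : Matrix (Fin p) (Fin p) ℝ} (h : ∀ i j, C i j = C j i)
    (x y : Fin p → ℝ) : dotProduct x (C.mulVec y) = dotProduct y (C.mulVec x) := by
  simp only [dotProduct, mulVec, Finset.mul_sum]
  rw [Finset.sum_comm]
  exact Finset.sum_congr rfl fun i _ => Finset.sum_congr rfl fun j _ => by rw [h j i]; ring

lemma gQ_sub_eq {C : Matrix (Fin p) (Fin p) ℝ}
    (hsymm : ∀ x y, dotProduct x (C.mulVec y) = dotProduct y (C.mulVec x))
    (w s η ηs : Fin p → ℝ) (lam : ℝ) :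
    gQ C (C.mulVec ηs + fun j => lam * w j * s j) w lam η
      - gQ C (C.mulVec ηs + fun j => lam * w j * s j) w lam ηs
    = (1/2) * dotProduct (η - ηs) (C.mulVec (η - ηs))
      + ∑ j, lam * w j * (|η j| - |ηs j| - s j * (η j - ηs j)) := by
  have e1 : dotProduct (η - ηs) (C.mulVec (η - ηs))
      = dotProduct η (C.mulVec η) - 2 * dotProduct η (C.mulVec ηs)
        + dotProduct ηs (C.mulVec ηs) := by
    simp only [mulVec_sub, dotProduct_sub, sub_dotProduct]
    rw [hsymm ηs η]; ring
  have e2 : ∀ a : Fin p → ℝ, dotProduct (C.mulVec ηs + fun j => lam * w j * s j) a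
      = dotProduct a (C.mulVec ηs) + ∑ j, lam * w j * (s j * a j) := by
    intro a
    rw [add_dotProduct, dotProduct_comm]
    congr 1
    exact Finset.sum_congr rfl fun j _ => by ring
  have e3 : ∑ j, lam * w j * (|η j| - |ηs j| - s j * (η j - ηs j))
      = (lam * ∑ j, w j * |η j| - lam * ∑ j, w j * |ηs j|
        - ∑ j, lam * w j * (s j * η j)) + ∑ j, lam * w j * (s j * ηs j) := by
    rw [Finset.mul_sum, Finset.mul_sum, ← Finset.sum_sub_distrib, ← Finset.sum_sub_distrib,
      ← Finset.sum_add_distrib]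
    exact Finset.sum_congr rfl fun j _ => by ring
  simp only [gQ]
  rw [e2 η, e2 ηs, e1, e3]
  ring

lemma kkt_sufficient {C : Matrix (Fin p) (Fin p) ℝ}
    (hsymm : ∀ x y, dotProduct x (C.mulVec y) = dotProduct y (C.mulVec x))
    (hpos : ∀ x : Fin p → ℝ, 0 ≤ dotProduct x (C.mulVec x))
    {w s ηs v : Fin p → ℝ} {lam : ℝ} (hlam : 0 ≤ lam) (hw : ∀ j, 0 ≤ w j)
    (hs : IsL1Subgradient s ηs)
    (heq : C.mulVec ηs + (fun j => lam * w j * s j) = v) :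
    ∀ η, gQ C v w lam ηs ≤ gQ C v w lam η := by
  subst heq
  intro η
  have key := gQ_sub_eq hsymm w s η ηs lam
  have h1 : 0 ≤ dotProduct (η - ηs) (C.mulVec (η - ηs)) := hpos _
  have h2 : 0 ≤ ∑ j, lam * w j * (|η j| - |ηs j| - s j * (η j - ηs j)) := by
    refine Finset.sum_nonneg fun j _ => ?_
    have hsle : |s j| ≤ 1 := by
      by_cases h : ηs j = 0
      · exact (hs j).2 h
      · rw [(hs j).1 h]; exact abs_sign_le _
    have hse : s j * ηs j = |ηs j| := by
      by_cases h : ηs j = 0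
      · simp [h]
      · rw [(hs j).1 h]; exact sign_mul_self _
    have h3 : s j * η j ≤ |η j| := by
      calc s j * η j ≤ |s j * η j| := le_abs_self _
        _ = |s j| * |η j| := abs_mul _ _
        _ ≤ 1 * |η j| := mul_le_mul_of_nonneg_right hsle (abs_nonneg _)
        _ = |η j| := one_mul _
    have hexp : s j * (η j - ηs j) = s j * η j - s j * ηs j := by ring
    have h4 : 0 ≤ |η j| - |ηs j| - s j * (η j - ηs j) := by
      rw [hexp, hse]; linarith
    exact mul_nonneg (mul_nonneg hlam (hw j)) h4
  linarith

lemma kkt_necessary {C : Matrix (Fin p) (Fin p) ℝ}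
    (hsymm : ∀ x y, dotProduct x (C.mulVec y) = dotProduct y (C.mulVec x))
    (hpos : ∀ x : Fin p → ℝ, 0 ≤ dotProduct x (C.mulVec x))
    {w ηs v : Fin p → ℝ} {lam : ℝ} (hlam : 0 < lam) (hw : ∀ j, 0 < w j)
    (hmin : ∀ η, gQ C v w lam ηs ≤ gQ C v w lam η) :
    ∃ s, IsL1Subgradient s ηs ∧ C.mulVec ηs + (fun j => lam * w j * s j) = v := by
  classical
  have hee : ∀ j : Fin p,
      dotProduct (Pi.single j 1 : Fin p → ℝ) (C.mulVec (Pi.single j 1)) = C j j := by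
    intro j
    rw [Matrix.mulVec_single, single_dotProduct]
    simp
  have hce : ∀ (j : Fin p) (z : Fin p → ℝ),
      dotProduct (Pi.single j 1 : Fin p → ℝ) z = z j := by
    intro j z; rw [single_dotProduct, one_mul]
  have expand : ∀ (j : Fin p) (t : ℝ),
      gQ C v w lam (ηs + t • (Pi.single j 1 : Fin p → ℝ))
        = gQ C v w lam ηs + (t^2/2) * C j j + t * (C.mulVec ηs j - v j)
          + lam * w j * (|ηs j + t| - |ηs j|) := by
    intro j t
    have hq : dotProduct (ηs + t • (Pi.single j 1 : Fin p → ℝ))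
          (C.mulVec (ηs + t • (Pi.single j 1 : Fin p → ℝ)))
        = dotProduct ηs (C.mulVec ηs) + 2 * t * (C.mulVec ηs j) + t^2 * C j j := by
      rw [mulVec_add, mulVec_smul, dotProduct_add, add_dotProduct, add_dotProduct,
        dotProduct_smul, smul_dotProduct, smul_dotProduct, dotProduct_smul,
        hsymm ηs (Pi.single j 1), hce j (C.mulVec ηs), hee j]
      simp only [smul_eq_mul]
      ring
    have hv : dotProduct v (ηs + t • (Pi.single j 1 : Fin p → ℝ))
        = dotProduct v ηs + t * v j := by
      rw [dotProduct_add, dotProduct_smul, dotProduct_single]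
      simp only [smul_eq_mul, mul_one]
    have habs : ∑ k, w k * |(ηs + t • (Pi.single j 1 : Fin p → ℝ)) k|
        = ∑ k, w k * |ηs k| + w j * (|ηs j + t| - |ηs j|) := by
      have h0 : ∑ k, w k * |(ηs + t • (Pi.single j 1 : Fin p → ℝ)) k| - ∑ k, w k * |ηs k|
          = ∑ k, (w k * |(ηs + t • (Pi.single j 1 : Fin p → ℝ)) k| - w k * |ηs k|) :=
        (Finset.sum_sub_distrib _ _).symm
      have h1 : ∑ k, (w k * |(ηs + t • (Pi.single j 1 : Fin p → ℝ)) k| - w k * |ηs k|)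
          = w j * (|ηs j + t| - |ηs j|) := by
        rw [Finset.sum_eq_single j]
        · simp [Pi.single_eq_same, mul_sub]
        · intro k _ hk
          simp [Pi.single_eq_of_ne hk]
        · intro h; exact absurd (Finset.mem_univ j) h
      linarith
    simp only [gQ]
    rw [hq, hv, habs]
    ring
  have key : ∀ (j : Fin p) (t : ℝ),
      0 ≤ (t^2/2) * C j j + t * (C.mulVec ηs j - v j)
        + lam * w j * (|ηs j + t| - |ηs j|) := by
    intro j t
    have h := hmin (ηs + t • (Pi.single j 1 : Fin p → ℝ))
    rw [expand j t] at h
    linarith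
  have hCjj : ∀ j, 0 ≤ C j j := by
    intro j
    have := hpos (Pi.single j 1)
    rwa [hee j] at this
  refine ⟨fun j => (v j - C.mulVec ηs j) / (lam * w j), ?_, ?_⟩
  · intro j
    have hlw : 0 < lam * w j := mul_pos hlam (hw j)
    constructor
    · intro hne
      set σ := Real.sign (ηs j) with hσ
      set c := (v j - C.mulVec ηs j) - lam * w j * σ with hcdef
      have hηpos : 0 < |ηs j| := abs_pos.mpr hne
      have habs2 : ∀ t : ℝ, |t| < |ηs j| → |ηs j + t| = |ηs j| + t * σ := by
        intro t ht
        rcases hne.lt_or_gt with hn | hp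
        · rw [abs_of_neg hn] at ht ⊢
          rw [hσ, Real.sign_of_neg hn]
          have h2 := abs_lt.mp ht
          rw [abs_of_neg (by linarith : ηs j + t < 0)]
          ring
        · rw [abs_of_pos hp] at ht ⊢
          rw [hσ, Real.sign_of_pos hp]
          have h2 := abs_lt.mp ht
          rw [abs_of_pos (by linarith : 0 < ηs j + t)]
          ring
      have hkey : ∀ t : ℝ, |t| < |ηs j| → t * c ≤ t^2/2 * C j j := by
        intro t ht
        have h1 := key j t
        rw [habs2 t ht] at h1
        have hexp : t * c = -(t * (C.mulVec ηs j - v j))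
            - lam * w j * (|ηs j| + t * σ - |ηs j|) := by
          rw [hcdef]; ring
        linarith [h1, hexp.le, hexp.ge]
      have hsmall : ∀ δ : ℝ, 0 < δ → |c| ≤ δ := by
        intro δ hδ
        set ε := min (|ηs j|/2) (2*δ/(C j j + 1)) with hε
        have hC1 : (0:ℝ) < C j j + 1 := by linarith [hCjj j]
        have hε0 : 0 < ε := lt_min (by linarith) (by positivity)
        have hε1 : |ε| < |ηs j| := by
          rw [abs_of_pos hε0]
          exact lt_of_le_of_lt (min_le_left _ _) (by linarith)
        have hε2 : |(-ε)| < |ηs j| := by rwa [abs_neg]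
        have k1 := hkey ε hε1
        have k2 := hkey (-ε) hε2
        have k1' : ε * c ≤ ε * (ε * C j j / 2) := by nlinarith
        have k2' : ε * (-c) ≤ ε * (ε * C j j / 2) := by nlinarith
        have hc1 : c ≤ ε * C j j / 2 := le_of_mul_le_mul_left k1' hε0
        have hc2 : -c ≤ ε * C j j / 2 := le_of_mul_le_mul_left k2' hε0
        have hεδ : ε * (C j j + 1) ≤ 2 * δ := by
          have := min_le_right (|ηs j|/2) (2*δ/(C j j + 1))
          rw [← hε] at this
          exact (le_div_iff₀ hC1).mp this
        have : ε * C j j / 2 ≤ δ := by nlinarith [hε0.le, hCjj j]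
        rw [abs_le]
        constructor <;> linarith
      have hc0 : c = 0 := by
        by_contra hne2
        have h1 : 0 < |c| := abs_pos.mpr hne2
        have h2 := hsmall (|c|/2) (by linarith)
        linarith
      have hva : v j - C.mulVec ηs j = lam * w j * σ := by
        have := hc0
        rw [hcdef] at this
        linarith
      show (v j - C.mulVec ηs j) / (lam * w j) = σ
      rw [hva, mul_comm, mul_div_assoc, div_self hlw.ne', mul_one]
    · intro hzero
      have hA : |v j - C.mulVec ηs j| ≤ lam * w j := by
        by_contra hcon
        push_neg at hcon
        set A := v j - C.mulVec ηs j with hAdef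
        set δ := (|A| - lam * w j)/2 with hδdef
        have hδ : 0 < δ := by rw [hδdef]; linarith
        have hC1 : (0:ℝ) < C j j + 1 := by linarith [hCjj j]
        set ε := 2*δ/(C j j + 1) with hε
        have hε0 : 0 < ε := by positivity
        have k1 := key j ε
        have k2 := key j (-ε)
        rw [hzero] at k1 k2
        simp only [zero_add, abs_zero, sub_zero] at k1 k2
        rw [abs_of_pos hε0] at k1
        rw [abs_of_neg (neg_lt_zero.mpr hε0), neg_neg] at k2
        have hc1 : A ≤ ε * C j j / 2 + lam * w j := by nlinarith
        have hc2 : -A ≤ ε * C j j / 2 + lam * w j := by nlinarith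
        have hεδ : ε * (C j j + 1) ≤ 2 * δ := by
          rw [hε]; rw [div_mul_cancel₀]; exact hC1.ne'
        have h3 : ε * C j j / 2 ≤ δ := by nlinarith [hε0.le, hCjj j]
        have h4 : |A| ≤ lam * w j + δ := by rw [abs_le]; constructor <;> linarith
        rw [hδdef] at h4
        linarith
      show |(v j - C.mulVec ηs j) / (lam * w j)| ≤ 1
      rw [abs_div, abs_of_pos hlw, div_le_one hlw]
      exact hA
  · funext j
    have hlw : lam * w j ≠ 0 := (mul_pos hlam (hw j)).ne'
    show C.mulVec ηs j + lam * w j * ((v j - C.mulVec ηs j) / (lam * w j)) = v j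
    rw [mul_comm (lam * w j), div_mul_cancel₀ _ hlw]
    ring

lemma gQ_min_unique {C : Matrix (Fin p) (Fin p) ℝ}
    (hpos : ∀ x : Fin p → ℝ, x ≠ 0 → 0 < dotProduct x (C.mulVec x))
    {w v b e : Fin p → ℝ} {lam : ℝ} (hlam : 0 ≤ lam) (hw : ∀ j, 0 ≤ w j)
    (hb : ∀ x, gQ C v w lam b ≤ gQ C v w lam x)
    (he : ∀ x, gQ C v w lam e ≤ gQ C v w lam x) : b = e := by
  by_contra hne
  have hd : b - e ≠ 0 := sub_ne_zero.mpr hne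
  set mid := (1/2 : ℝ) • (b + e) with hmid
  have hquad : dotProduct mid (C.mulVec mid)
      = (1/4) * (dotProduct b (C.mulVec b) + dotProduct b (C.mulVec e)
        + dotProduct e (C.mulVec b) + dotProduct e (C.mulVec e)) := by
    simp only [hmid, mulVec_smul, mulVec_add, dotProduct_smul, smul_dotProduct,
      dotProduct_add, add_dotProduct, smul_eq_mul]
    ring
  have hquad2 : dotProduct (b - e) (C.mulVec (b - e))
      = dotProduct b (C.mulVec b) - dotProduct b (C.mulVec e)
        - dotProduct e (C.mulVec b) + dotProduct e (C.mulVec e) := by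
    simp only [mulVec_sub, dotProduct_sub, sub_dotProduct]; ring
  have hlin : dotProduct v mid = (1/2) * (dotProduct v b + dotProduct v e) := by
    simp only [hmid, dotProduct_smul, dotProduct_add, smul_eq_mul]
    try ring
  have habs : ∑ k, w k * |mid k| ≤ (1/2) * (∑ k, w k * |b k| + ∑ k, w k * |e k|) := by
    calc ∑ k, w k * |mid k| ≤ ∑ k, (1/2) * (w k * |b k| + w k * |e k|) := by
          refine Finset.sum_le_sum fun k _ => ?_
          have hk : mid k = (1/2) * (b k + e k) := rfl
          rw [hk]
          have h1 : |(1/2 : ℝ) * (b k + e k)| ≤ (1/2) * (|b k| + |e k|) := by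
            rw [abs_mul, abs_of_pos (by norm_num : (0:ℝ) < 1/2)]
            have := abs_add_le (b k) (e k)
            linarith
          nlinarith [hw k, abs_nonneg ((1/2 : ℝ) * (b k + e k))]
        _ = (1/2) * (∑ k, w k * |b k| + ∑ k, w k * |e k|) := by
          rw [← Finset.mul_sum, ← Finset.sum_add_distrib]
  have habs' : lam * ∑ k, w k * |mid k|
      ≤ (1/2) * (lam * ∑ k, w k * |b k| + lam * ∑ k, w k * |e k|) := by
    have h := mul_le_mul_of_nonneg_left habs hlam
    nlinarith [h]
  have hgm : gQ C v w lam mid ≤ (1/2)*(gQ C v w lam b + gQ C v w lam e)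
      - (1/8) * dotProduct (b - e) (C.mulVec (b - e)) := by
    simp only [gQ]
    rw [hquad, hquad2, hlin]
    linarith
  have hpos' := hpos _ hd
  linarith [hb mid, he mid, hgm]

end LassoAux

open LassoAux in
/-- `η*` minimizes the posterior expected loss `∫ ℓ_B(η, β) dμ(β)` iff there is an ℓ₁
subgradient `s` at `η*` with `Cη* + λWs = Cm`, where `m` is the mean of `μ`; and when
`m` is the OLS estimate, a minimizer `η*` is the unique weighted Lasso minimizer. -/
theorem bayes_loss_minimizer {n p : ℕ}
    (X : Matrix (Fin n) (Fin p) ℝ) (hpn : p ≤ n) (hrank : X.rank = p)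
    (w : Fin p → ℝ) (hw : ∀ j, 0 < w j) (lam : ℝ) (hlam : 0 < lam)
    (μ : Measure (Fin p → ℝ)) [IsProbabilityMeasure μ]
    (m : Fin p → ℝ) (hm : m = ∫ b, b ∂μ)
    (hmom : Integrable (fun b : Fin p → ℝ => ‖b‖ ^ 2) μ) :
    (∀ ηstar : Fin p → ℝ,
      ((∀ η, ∫ b, bayesLoss ((n : ℝ)⁻¹ • (Xᵀ * X)) w lam ηstar b ∂μ ≤
          ∫ b, bayesLoss ((n : ℝ)⁻¹ • (Xᵀ * X)) w lam η b ∂μ) ↔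
        (∃ s : Fin p → ℝ, IsL1Subgradient s ηstar ∧
          ((n : ℝ)⁻¹ • (Xᵀ * X)).mulVec ηstar + (fun j => lam * w j * s j) =
            ((n : ℝ)⁻¹ • (Xᵀ * X)).mulVec m))) ∧
    (∀ y : Fin n → ℝ, m = ((Xᵀ * X)⁻¹ * Xᵀ).mulVec y →
      ∀ ηstar : Fin p → ℝ,
        (∀ η, ∫ b, bayesLoss ((n : ℝ)⁻¹ • (Xᵀ * X)) w lam ηstar b ∂μ ≤
          ∫ b, bayesLoss ((n : ℝ)⁻¹ • (Xᵀ * X)) w lam η b ∂μ) →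
        ((∀ b, lassoLoss X y w lam ηstar ≤ lassoLoss X y w lam b) ∧
          (∀ b, (∀ b', lassoLoss X y w lam b ≤ lassoLoss X y w lam b') → b = ηstar))) := by
  classical
  by_cases hp : p = 0
  · subst hp
    have huniq : ∀ a b : Fin 0 → ℝ, a = b := fun a b => funext fun j => j.elim0
    constructor
    · intro ηstar
      constructor
      · intro _
        exact ⟨fun j => 0, fun j => j.elim0, huniq _ _⟩
      · intro _ η
        rw [huniq η ηstar]
    · intro y hy ηstar _
      constructor
      · intro b
        rw [huniq b ηstar]
      · intro b _
        exact huniq b ηstar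
  · have hn : 0 < n := lt_of_lt_of_le (Nat.pos_of_ne_zero hp) hpn
    have hnR : (0:ℝ) < (n:ℝ) := Nat.cast_pos.mpr hn
    set C : Matrix (Fin p) (Fin p) ℝ := (n : ℝ)⁻¹ • (Xᵀ * X) with hCdef
    -- symmetry
    have hCsymm : ∀ x y, dotProduct x (C.mulVec y) = dotProduct y (C.mulVec x) := by
      apply dot_symm
      intro i j
      simp only [hCdef, Matrix.smul_apply, Matrix.mul_apply, Matrix.transpose_apply,
        smul_eq_mul]
      congr 1
      exact Finset.sum_congr rfl fun k _ => mul_comm _ _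
    -- quadratic form
    have hQ : ∀ x : Fin p → ℝ, dotProduct x (C.mulVec x)
        = (n:ℝ)⁻¹ * ∑ i, (X.mulVec x i)^2 := by
      intro x
      rw [hCdef, Matrix.smul_mulVec, dotProduct_smul, smul_eq_mul]
      congr 1
      rw [← Matrix.mulVec_mulVec, Matrix.dotProduct_mulVec, Matrix.vecMul_transpose]
      simp [dotProduct, pow_two]
    have hQnn : ∀ x : Fin p → ℝ, 0 ≤ dotProduct x (C.mulVec x) := by
      intro x
      rw [hQ]
      exact mul_nonneg (by positivity) (Finset.sum_nonneg fun i _ => sq_nonneg _)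
    -- invertibility of XᵀX and injectivity of X
    have hunit : IsUnit (Xᵀ * X) := by
      have hXtXrank : (Xᵀ * X).rank = p := by rw [X.rank_transpose_mul_self, hrank]
      have h2 : LinearMap.range (Xᵀ * X).mulVecLin = ⊤ := by
        apply Submodule.eq_top_of_finrank_eq
        unfold Matrix.rank at hXtXrank
        rw [hXtXrank, Module.finrank_fin_fun]
      rw [← Matrix.mulVec_surjective_iff_isUnit]
      have hs : Function.Surjective (Xᵀ * X).mulVecLin := LinearMap.range_eq_top.mp h2
      exact fun z => hs z
    have hXinj : ∀ x : Fin p → ℝ, X.mulVec x = 0 → x = 0 := by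
      intro x hx
      have h3 : (Xᵀ * X).mulVec x = 0 := by
        rw [← Matrix.mulVec_mulVec, hx, Matrix.mulVec_zero]
      have h4 := Matrix.mulVec_injective_iff_isUnit.mpr hunit
      exact h4 (by simp [h3])
    have hQpos : ∀ x : Fin p → ℝ, x ≠ 0 → 0 < dotProduct x (C.mulVec x) := by
      intro x hx
      rw [hQ]
      have hXx : X.mulVec x ≠ 0 := fun h => hx (hXinj x h)
      obtain ⟨i, hi⟩ : ∃ i, X.mulVec x i ≠ 0 := by
        by_contra hcon
        push_neg at hcon
        exact hXx (funext hcon)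
      refine mul_pos (by positivity) ?_
      exact Finset.sum_pos' (fun i _ => sq_nonneg _) ⟨i, Finset.mem_univ i, by positivity⟩
    -- integrability facts
    have hintc : Integrable (fun β : Fin p → ℝ => β) μ := by
      refine Integrable.mono' ((integrable_const 1).add hmom) aestronglyMeasurable_id
        (Filter.Eventually.of_forall fun β => ?_)
      simp only [Pi.add_apply]
      nlinarith [norm_nonneg β, sq_nonneg (‖β‖ - 1)]
    have hcoord : ∀ j, Integrable (fun β : Fin p → ℝ => β j) μ := by
      intro j
      refine Integrable.mono' ((integrable_const 1).add hmom)
        (measurable_pi_apply j).aestronglyMeasurable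
        (Filter.Eventually.of_forall fun β => ?_)
      simp only [Pi.add_apply]
      have h1 : ‖β j‖ ≤ ‖β‖ := norm_le_pi_norm β j
      nlinarith [norm_nonneg β, sq_nonneg (‖β‖ - 1)]
    have hmj : ∀ j, ∫ β, β j ∂μ = m j := by
      intro j
      rw [hm]
      have := (ContinuousLinearMap.proj (R := ℝ) (φ := fun _ : Fin p => ℝ)
        j).integral_comp_comm hintc
      simpa using this
    have hlinint : ∀ u : Fin p → ℝ, Integrable (fun β => dotProduct u β) μ := by
      intro u
      have : (fun β : Fin p → ℝ => dotProduct u β) = fun β => ∑ j, u j * β j := rfl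
      rw [this]
      exact integrable_finset_sum _ fun j _ => (hcoord j).const_mul (u j)
    have hlinval : ∀ u : Fin p → ℝ, ∫ β, dotProduct u β ∂μ = dotProduct u m := by
      intro u
      have h1 : (fun β : Fin p → ℝ => dotProduct u β) = fun β => ∑ j, u j * β j := rfl
      rw [h1, integral_finset_sum _ fun j _ => (hcoord j).const_mul (u j)]
      simp only [integral_const_mul]
      rw [dotProduct]
      exact Finset.sum_congr rfl fun j _ => by rw [hmj j]
    have hquadint : Integrable (fun β : Fin p → ℝ => dotProduct β (C.mulVec β)) μ := by
      refine Integrable.mono' (hmom.const_mul (∑ i, ∑ j, |C i j|)) ?_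
        (Filter.Eventually.of_forall fun β => ?_)
      · apply Measurable.aestronglyMeasurable
        show Measurable fun β : Fin p → ℝ => ∑ i, β i * ∑ j, C i j * β j
        apply Finset.measurable_sum
        intro i _
        exact (measurable_pi_apply i).mul
          (Finset.measurable_sum _ fun j _ => (measurable_pi_apply j).const_mul _)
      · show ‖∑ i, β i * ∑ j, C i j * β j‖ ≤ (∑ i, ∑ j, |C i j|) * ‖β‖^2
        rw [Real.norm_eq_abs]
        calc |∑ i, β i * ∑ j, C i j * β j| ≤ ∑ i, |β i * ∑ j, C i j * β j| :=
              Finset.abs_sum_le_sum_abs _ _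
          _ ≤ ∑ i, ∑ j, |C i j| * ‖β‖^2 := by
              refine Finset.sum_le_sum fun i _ => ?_
              rw [abs_mul]
              calc |β i| * |∑ j, C i j * β j| ≤ ‖β‖ * ∑ j, |C i j * β j| := by
                    refine mul_le_mul (norm_le_pi_norm β i)
                      (Finset.abs_sum_le_sum_abs _ _) (abs_nonneg _) (norm_nonneg _)
                _ ≤ ‖β‖ * ∑ j, |C i j| * ‖β‖ := by
                    refine mul_le_mul_of_nonneg_left (Finset.sum_le_sum fun j _ => ?_)
                      (norm_nonneg _)
                    rw [abs_mul]
                    exact mul_le_mul_of_nonneg_left (norm_le_pi_norm β j) (abs_nonneg _)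
                _ = ∑ j, |C i j| * ‖β‖^2 := by
                    rw [Finset.mul_sum]
                    exact Finset.sum_congr rfl fun j _ => by ring
          _ = (∑ i, ∑ j, |C i j|) * ‖β‖^2 := by
              rw [Finset.sum_mul]
              exact Finset.sum_congr rfl fun i _ => (Finset.sum_mul _ _ _).symm
    -- integral representation
    have hKrep : ∀ η, ∫ β, bayesLoss C w lam η β ∂μ
        = gQ C (C.mulVec m) w lam η + (1/2) * ∫ β, dotProduct β (C.mulVec β) ∂μ := by
      intro η
      have hpt : ∀ β, bayesLoss C w lam η β
          = ((1/2) * dotProduct η (C.mulVec η) + lam * ∑ j, w j * |η j|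
              - dotProduct (C.mulVec η) β) + (1/2) * dotProduct β (C.mulVec β) := by
        intro β
        simp only [bayesLoss]
        have e1 : dotProduct (η - β) (C.mulVec (η - β))
            = dotProduct η (C.mulVec η) - 2 * dotProduct (C.mulVec η) β
              + dotProduct β (C.mulVec β) := by
          simp only [mulVec_sub, dotProduct_sub, sub_dotProduct]
          rw [hCsymm η β, dotProduct_comm β (C.mulVec η)]
          ring
        rw [e1]; ring
      rw [show (fun β => bayesLoss C w lam η β)
          = fun β => ((1/2) * dotProduct η (C.mulVec η) + lam * ∑ j, w j * |η j|
              - dotProduct (C.mulVec η) β) + (1/2) * dotProduct β (C.mulVec β)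
        from funext hpt]
      have hint1 : Integrable (fun β : Fin p → ℝ =>
          (1/2) * dotProduct η (C.mulVec η) + lam * ∑ j, w j * |η j|
            - dotProduct (C.mulVec η) β) μ :=
        (integrable_const _).sub (hlinint (C.mulVec η))
      have hint2 : Integrable (fun β : Fin p → ℝ =>
          (1/2) * dotProduct β (C.mulVec β)) μ := hquadint.const_mul (1/2)
      rw [integral_add hint1 hint2]
      rw [integral_sub (integrable_const _) (hlinint (C.mulVec η)),
        integral_const, integral_const_mul, hlinval]
      have hcross : dotProduct (C.mulVec η) m = dotProduct (C.mulVec m) η := by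
        rw [dotProduct_comm, hCsymm m η, dotProduct_comm]
      rw [hcross]
      simp only [measure_univ, probReal_univ, ENNReal.toReal_one, one_smul, smul_eq_mul, gQ]
      ring
    have hminiff : ∀ ηstar : Fin p → ℝ,
        (∀ η, ∫ β, bayesLoss C w lam ηstar β ∂μ ≤ ∫ β, bayesLoss C w lam η β ∂μ) ↔
        (∀ η, gQ C (C.mulVec m) w lam ηstar ≤ gQ C (C.mulVec m) w lam η) := by
      intro ηstar
      constructor
      · intro h η
        have := h η
        rw [hKrep, hKrep] at this
        linarith
      · intro h η
        rw [hKrep, hKrep]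
        linarith [h η]
    constructor
    · intro ηstar
      rw [hminiff ηstar]
      constructor
      · intro h
        exact kkt_necessary hCsymm hQnn hlam hw h
      · rintro ⟨s, hs, heq⟩
        exact kkt_sufficient hCsymm hQnn hlam.le (fun j => (hw j).le) hs heq
    · intro y hy ηstar hmin
      have hgmin : ∀ η, gQ C (C.mulVec m) w lam ηstar ≤ gQ C (C.mulVec m) w lam η :=
        (hminiff ηstar).mp hmin
      have hdet : IsUnit (Xᵀ * X).det := (Matrix.isUnit_iff_isUnit_det _).mp hunit
      have hv : C.mulVec m = (n:ℝ)⁻¹ • (Xᵀ.mulVec y) := by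
        calc C.mulVec m = (n:ℝ)⁻¹ • ((Xᵀ * X).mulVec (((Xᵀ * X)⁻¹ * Xᵀ).mulVec y)) := by
              rw [hCdef, Matrix.smul_mulVec, hy]
          _ = (n:ℝ)⁻¹ • (Xᵀ.mulVec y) := by
              rw [Matrix.mulVec_mulVec, ← Matrix.mul_assoc,
                Matrix.mul_nonsing_inv _ hdet, Matrix.one_mul]
      have hlasso : ∀ b, lassoLoss X y w lam b
          = n * gQ C (C.mulVec m) w lam b + (1/2) * ∑ i, (y i)^2 := by
        intro b
        simp only [lassoLoss, gQ]
        have h1 := hQ b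
        have h2 : dotProduct (C.mulVec m) b = (n:ℝ)⁻¹ * ∑ i, y i * X.mulVec b i := by
          rw [hv, smul_dotProduct, smul_eq_mul]
          congr 1
          rw [Matrix.mulVec_transpose, ← Matrix.dotProduct_mulVec]
          rfl
        have h3 : ∑ i, (y i - X.mulVec b i)^2
            = ∑ i, (y i)^2 - 2 * ∑ i, y i * X.mulVec b i + ∑ i, (X.mulVec b i)^2 := by
          rw [Finset.mul_sum, ← Finset.sum_sub_distrib, ← Finset.sum_add_distrib]
          exact Finset.sum_congr rfl fun i _ => by ring
        rw [h1, h2, h3]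
        field_simp
        ring
      constructor
      · intro b
        rw [hlasso b, hlasso ηstar]
        have h := hgmin b
        nlinarith [hnR.le]
      · intro b hb
        have hbg : ∀ b', gQ C (C.mulVec m) w lam b ≤ gQ C (C.mulVec m) w lam b' := by
          intro b'
          have h := hb b'
          rw [hlasso b, hlasso b'] at h
          have h2 : (n:ℝ) * gQ C (C.mulVec m) w lam b
              ≤ (n:ℝ) * gQ C (C.mulVec m) w lam b' := by linarith
          exact le_of_mul_le_mul_left h2 hnR
        exact gQ_min_unique hQpos hlam.le (fun j => (hw j).le) hbg hgmin
end

section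
/- Consider y = Xβ₀ + ε with X a fixed n×p matrix whose columns are in general position, so that for every y and λ > 0 the weighted Lasso minimizer β̂ is unique. Let A₀ = supp(β₀) with C_{A₀A₀} positive definite, I₀ = {1,…,p}\A₀, s₀ = sgn(β₀_{A₀}), D(A₀) = (C_{A₀} | λW_{I₀}) (invertible), U = Xᵀε/n, μ⁰ = D(A₀)^{-1}(Cβ₀ − λW_{A₀}s₀), and Z = D(A₀)^{-1}U + μ⁰ ∈ R^p. Then the event {supp(β̂) = A₀ and sgn(β̂_{A₀}) = s₀} coincides exactly with the event {Z ∈ Ω_{A₀,s₀}}, where Z ∈ Ω_{A₀,s₀} means sgn(Z_j) = s₀_j for all j ∈ A₀ and |Z_j| ≤ 1 for all j ∈ I₀; on this event, (β̂_{A₀}, S_{I₀}) = Z, where S is the Lasso subgradient. Consequently P(supp(β̂) = A₀, sgn(β̂_{A₀}) = s₀) = P(Z ∈ Ω_{A₀,s₀}) for any n ≥ 1 and p ≥ 1, regardless of the relative size of n and p. -/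
open Matrix MeasureTheory

lemma Dmat_mulVec {p : ℕ} (C : Matrix (Fin p) (Fin p) ℝ) (w : Fin p → ℝ) (lam : ℝ)
    (A : Finset (Fin p)) (v : Fin p → ℝ) :
    (Dmat C w lam A).mulVec v =
      C.mulVec (fun j => if j ∈ A then v j else 0) +
        fun i => if i ∈ A then 0 else lam * w i * v i := by
  funext i
  simp only [Matrix.mulVec, dotProduct, Dmat, Pi.add_apply]
  have key : ∀ j, (if j ∈ A then C i j else if i = j then lam * w j else 0) * v j
      = C i j * (if j ∈ A then v j else 0)
        + (if i = j then (if j ∈ A then 0 else lam * w j * v j) else 0) := by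
    intro j
    by_cases hj : j ∈ A <;> by_cases hij : i = j <;> simp [hj, hij]
  rw [Finset.sum_congr rfl fun j _ => key j, Finset.sum_add_distrib, Finset.sum_ite_eq]
  simp

theorem sign_core {n p : ℕ}
    (X : Matrix (Fin n) (Fin p) ℝ)
    (w : Fin p → ℝ) (lam : ℝ)
    (β₀ : Fin p → ℝ) (A₀ : Finset (Fin p)) (hA₀ : ∀ j, j ∈ A₀ ↔ β₀ j ≠ 0)
    (hD : IsUnit (Dmat ((n : ℝ)⁻¹ • (Xᵀ * X)) w lam A₀).det)
    (bhat Shat : (Fin n → ℝ) → (Fin p → ℝ))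
    (hsub : ∀ y, IsL1Subgradient (Shat y) (bhat y))
    (hKKT : ∀ y, (fun j => (n : ℝ)⁻¹ * Xᵀ.mulVec y j) =
      ((n : ℝ)⁻¹ • (Xᵀ * X)).mulVec (bhat y) + fun j => lam * w j * Shat y j)
    (huniq : ∀ y (b s : Fin p → ℝ), IsL1Subgradient s b →
      ((fun j => (n : ℝ)⁻¹ * Xᵀ.mulVec y j) =
        ((n : ℝ)⁻¹ • (Xᵀ * X)).mulVec b + fun j => lam * w j * s j) →
      b = bhat y ∧ s = Shat y)
    (μ0 : Fin p → ℝ)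
    (hμ0 : μ0 = (Dmat ((n : ℝ)⁻¹ • (Xᵀ * X)) w lam A₀)⁻¹.mulVec
      (((n : ℝ)⁻¹ • (Xᵀ * X)).mulVec β₀ -
        fun j => if j ∈ A₀ then lam * w j * Real.sign (β₀ j) else 0))
    (Z : (Fin n → ℝ) → (Fin p → ℝ))
    (hZ : ∀ ε, Z ε = (Dmat ((n : ℝ)⁻¹ • (Xᵀ * X)) w lam A₀)⁻¹.mulVec
      (fun j => (n : ℝ)⁻¹ * Xᵀ.mulVec ε j) + μ0)
    (ε : Fin n → ℝ) :
    (((∀ j, bhat (X.mulVec β₀ + ε) j ≠ 0 ↔ j ∈ A₀) ∧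
        (∀ j ∈ A₀, Real.sign (bhat (X.mulVec β₀ + ε) j) = Real.sign (β₀ j))) ↔
       ((∀ j ∈ A₀, Real.sign (Z ε j) = Real.sign (β₀ j)) ∧
        (∀ j ∉ A₀, |Z ε j| ≤ 1))) ∧
      (((∀ j, bhat (X.mulVec β₀ + ε) j ≠ 0 ↔ j ∈ A₀) ∧
        (∀ j ∈ A₀, Real.sign (bhat (X.mulVec β₀ + ε) j) = Real.sign (β₀ j))) →
       ((∀ j ∈ A₀, bhat (X.mulVec β₀ + ε) j = Z ε j) ∧
        (∀ j ∉ A₀, Shat (X.mulVec β₀ + ε) j = Z ε j))) := by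
  set C : Matrix (Fin p) (Fin p) ℝ := (n : ℝ)⁻¹ • (Xᵀ * X) with hC
  set y : Fin n → ℝ := X.mulVec β₀ + ε with hy
  set g : Fin p → ℝ := fun j => (n : ℝ)⁻¹ * Xᵀ.mulVec y j with hg
  set h : Fin p → ℝ := fun j => if j ∈ A₀ then lam * w j * Real.sign (β₀ j) else 0 with hh
  -- Z ε in terms of y
  have hZy : Z ε = (Dmat C w lam A₀)⁻¹.mulVec (g - h) := by
    rw [hZ, hμ0, ← Matrix.mulVec_add]
    have harg : (fun j => (n : ℝ)⁻¹ * Xᵀ.mulVec ε j) + (C.mulVec β₀ - h) = g - h := by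
      funext j
      have h1 : Xᵀ.mulVec y j = Xᵀ.mulVec (X.mulVec β₀) j + Xᵀ.mulVec ε j := by
        rw [hy, Matrix.mulVec_add]; rfl
      have h2 : C.mulVec β₀ j = (n : ℝ)⁻¹ * Xᵀ.mulVec (X.mulVec β₀) j := by
        rw [hC, Matrix.smul_mulVec, Matrix.mulVec_mulVec]
        simp
      simp only [Pi.add_apply, Pi.sub_apply, hg]
      rw [h1, h2]; ring
    rw [harg]
  have hDZ : (Dmat C w lam A₀).mulVec (Z ε) = g - h := by
    rw [hZy, Matrix.mulVec_mulVec, Matrix.mul_nonsing_inv _ hD, Matrix.one_mulVec]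
  -- forward: on the event, Z is the packed vector
  have hfwd : ((∀ j, bhat y j ≠ 0 ↔ j ∈ A₀) ∧
      (∀ j ∈ A₀, Real.sign (bhat y j) = Real.sign (β₀ j))) →
      Z ε = fun j => if j ∈ A₀ then bhat y j else Shat y j := by
    rintro ⟨H1, H2⟩
    have hDvv : (Dmat C w lam A₀).mulVec
        (fun j => if j ∈ A₀ then bhat y j else Shat y j) = g - h := by
      rw [Dmat_mulVec]
      have hb : (fun j => if j ∈ A₀ then (if j ∈ A₀ then bhat y j else Shat y j) else 0)
          = bhat y := by
        funext j
        by_cases hj : j ∈ A₀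
        · simp [hj]
        · have hbj : bhat y j = 0 := by
            by_contra hc; exact hj ((H1 j).mp hc)
          simp [hj, hbj]
      rw [hb]
      funext i
      have hKi := congrFun (hKKT y) i
      simp only [Pi.add_apply] at hKi
      by_cases hi : i ∈ A₀
      · have hbi : bhat y i ≠ 0 := (H1 i).mpr hi
        have hSi : Shat y i = Real.sign (β₀ i) := by
          rw [(hsub y i).1 hbi, H2 i hi]
        rw [hSi] at hKi
        simp only [Pi.add_apply, Pi.sub_apply, hg, hh, hi, if_pos, add_zero, if_true]
        linarith
      · simp only [Pi.add_apply, Pi.sub_apply, hg, hh, hi, if_false, ite_false]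
        linarith
    calc Z ε = (Dmat C w lam A₀)⁻¹.mulVec ((Dmat C w lam A₀).mulVec
          (fun j => if j ∈ A₀ then bhat y j else Shat y j)) := by rw [hDvv, ← hZy]
      _ = _ := by
          rw [Matrix.mulVec_mulVec, Matrix.nonsing_inv_mul _ hD, Matrix.one_mulVec]
  constructor
  · constructor
    · rintro ⟨H1, H2⟩
      have hv := hfwd ⟨H1, H2⟩
      constructor
      · intro j hj
        rw [congrFun hv j, if_pos hj]
        exact H2 j hj
      · intro j hj
        rw [congrFun hv j, if_neg hj]
        exact (hsub y j).2 (by by_contra hc; exact hj ((H1 j).mp hc))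
    · rintro ⟨HZ1, HZ2⟩
      have hZne : ∀ j ∈ A₀, Z ε j ≠ 0 := by
        intro j hj hc
        have h0 : Real.sign (β₀ j) = 0 := by rw [← HZ1 j hj, hc, Real.sign_zero]
        exact (hA₀ j).mp hj (Real.sign_eq_zero_iff.mp h0)
      have hsubg : IsL1Subgradient (fun j => if j ∈ A₀ then Real.sign (β₀ j) else Z ε j)
          (fun j => if j ∈ A₀ then Z ε j else 0) := by
        intro j
        by_cases hj : j ∈ A₀
        · refine ⟨fun _ => ?_, fun hbj => absurd ?_ (hZne j hj)⟩
          · simp only [if_pos hj]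
            exact (HZ1 j hj).symm
          · simpa [hj] using hbj
        · refine ⟨fun hbj => ((by simp [hj] at hbj : False)).elim, fun _ => ?_⟩
          simpa [hj] using HZ2 j hj
      have hKs : (fun j => (n : ℝ)⁻¹ * Xᵀ.mulVec y j) =
          C.mulVec (fun j => if j ∈ A₀ then Z ε j else 0) +
            fun j => lam * w j * (if j ∈ A₀ then Real.sign (β₀ j) else Z ε j) := by
        have h2 := hDZ
        rw [Dmat_mulVec] at h2
        funext j
        have h2j := congrFun h2 j
        simp only [Pi.add_apply, Pi.sub_apply, hg, hh] at h2j ⊢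
        by_cases hj : j ∈ A₀ <;> simp only [hj, if_true, if_false, ite_true, ite_false] at h2j ⊢ <;>
          linarith
      obtain ⟨hb, hs⟩ := huniq y _ _ hsubg hKs
      have hbj : ∀ j, bhat y j = if j ∈ A₀ then Z ε j else 0 := fun j => (congrFun hb j).symm
      refine ⟨fun j => ?_, fun j hj => ?_⟩
      · rw [hbj j]
        by_cases hj : j ∈ A₀
        · simp [hj, hZne j hj]
        · simp [hj]
      · rw [hbj j, if_pos hj]
        exact HZ1 j hj
  · rintro ⟨H1, H2⟩
    have hv := hfwd ⟨H1, H2⟩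
    exact ⟨fun j hj => by rw [congrFun hv j, if_pos hj],
           fun j hj => by rw [congrFun hv j, if_neg hj]⟩

/-- The sign-recovery event `{supp(β̂) = A₀, sgn(β̂_{A₀}) = s₀}` coincides with
`{Z ∈ Ω_{A₀,s₀}}` for `Z = D(A₀)⁻¹ U + μ⁰`, on which `(β̂_{A₀}, S_{I₀}) = Z`;
consequently the two events have the same probability, for any `n ≥ 1` and `p ≥ 1`. -/
theorem sign_recovery_event_eq {n p : ℕ} (hn : 1 ≤ n) (hp : 1 ≤ p)
    (X : Matrix (Fin n) (Fin p) ℝ)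
    (w : Fin p → ℝ) (hw : ∀ j, 0 < w j) (lam : ℝ) (hlam : 0 < lam)
    (β₀ : Fin p → ℝ) (A₀ : Finset (Fin p)) (hA₀ : ∀ j, j ∈ A₀ ↔ β₀ j ≠ 0)
    (hPD : (((n : ℝ)⁻¹ • (Xᵀ * X)).submatrix
      (fun i : A₀ => (i : Fin p)) (fun j : A₀ => (j : Fin p))).PosDef)
    (hD : IsUnit (Dmat ((n : ℝ)⁻¹ • (Xᵀ * X)) w lam A₀).det)
    -- the Lasso estimator and its subgradient (columns of X in general position:
    -- the KKT system has a unique solution for every response)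
    (bhat Shat : (Fin n → ℝ) → (Fin p → ℝ))
    (hmin : ∀ y b, lassoLoss X y w lam (bhat y) ≤ lassoLoss X y w lam b)
    (hsub : ∀ y, IsL1Subgradient (Shat y) (bhat y))
    (hKKT : ∀ y, (fun j => (n : ℝ)⁻¹ * Xᵀ.mulVec y j) =
      ((n : ℝ)⁻¹ • (Xᵀ * X)).mulVec (bhat y) + fun j => lam * w j * Shat y j)
    (huniq : ∀ y (b s : Fin p → ℝ), IsL1Subgradient s b →
      ((fun j => (n : ℝ)⁻¹ * Xᵀ.mulVec y j) =
        ((n : ℝ)⁻¹ • (Xᵀ * X)).mulVec b + fun j => lam * w j * s j) →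
      b = bhat y ∧ s = Shat y)
    -- Z = D(A₀)⁻¹ U + μ⁰
    (μ0 : Fin p → ℝ)
    (hμ0 : μ0 = (Dmat ((n : ℝ)⁻¹ • (Xᵀ * X)) w lam A₀)⁻¹.mulVec
      (((n : ℝ)⁻¹ • (Xᵀ * X)).mulVec β₀ -
        fun j => if j ∈ A₀ then lam * w j * Real.sign (β₀ j) else 0))
    (Z : (Fin n → ℝ) → (Fin p → ℝ))
    (hZ : ∀ ε, Z ε = (Dmat ((n : ℝ)⁻¹ • (Xᵀ * X)) w lam A₀)⁻¹.mulVec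
      (fun j => (n : ℝ)⁻¹ * Xᵀ.mulVec ε j) + μ0) :
    (∀ ε : Fin n → ℝ,
      (((∀ j, bhat (X.mulVec β₀ + ε) j ≠ 0 ↔ j ∈ A₀) ∧
        (∀ j ∈ A₀, Real.sign (bhat (X.mulVec β₀ + ε) j) = Real.sign (β₀ j))) ↔
       ((∀ j ∈ A₀, Real.sign (Z ε j) = Real.sign (β₀ j)) ∧
        (∀ j ∉ A₀, |Z ε j| ≤ 1))) ∧
      (((∀ j, bhat (X.mulVec β₀ + ε) j ≠ 0 ↔ j ∈ A₀) ∧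
        (∀ j ∈ A₀, Real.sign (bhat (X.mulVec β₀ + ε) j) = Real.sign (β₀ j))) →
       ((∀ j ∈ A₀, bhat (X.mulVec β₀ + ε) j = Z ε j) ∧
        (∀ j ∉ A₀, Shat (X.mulVec β₀ + ε) j = Z ε j)))) ∧
    (∀ (Ω : Type) (_m : MeasurableSpace Ω) (Pr : Measure Ω) (εr : Ω → Fin n → ℝ),
      Pr {ω | (∀ j, bhat (X.mulVec β₀ + εr ω) j ≠ 0 ↔ j ∈ A₀) ∧
              (∀ j ∈ A₀, Real.sign (bhat (X.mulVec β₀ + εr ω) j) = Real.sign (β₀ j))} =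
      Pr {ω | (∀ j ∈ A₀, Real.sign (Z (εr ω) j) = Real.sign (β₀ j)) ∧
              (∀ j ∉ A₀, |Z (εr ω) j| ≤ 1)}) := by
  have core := fun ε => sign_core X w lam β₀ A₀ hA₀ hD bhat Shat hsub hKKT huniq μ0 hμ0 Z hZ ε
  refine ⟨core, ?_⟩
  intro Ω _m Pr εr
  have hset : {ω | (∀ j, bhat (X.mulVec β₀ + εr ω) j ≠ 0 ↔ j ∈ A₀) ∧
      (∀ j ∈ A₀, Real.sign (bhat (X.mulVec β₀ + εr ω) j) = Real.sign (β₀ j))} =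
      {ω | (∀ j ∈ A₀, Real.sign (Z (εr ω) j) = Real.sign (β₀ j)) ∧
      (∀ j ∉ A₀, |Z (εr ω) j| ≤ 1)} := Set.ext fun ω => (core (εr ω)).1
  rw [hset]
end
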